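/- Boosting for maximum distributional complexity (Schapire-style): for every success probability γ ∈ [1/2, 1] and every (possibly partial) Boolean-valued function f : X → {0,1} with X ⊆ {0,1}^m, the maximum distributional query complexity with the success-probability score satisfies R̄̄_{3γ²−2γ³}(f) ≤ 4·R̄̄_γ(f). -/

import Mathlib

open Finset

/-- Deterministic decision trees querying coordinates `i : ι` of inputs `x : ι → Bool`,
with leaves labelled by elements of `L`. -/
inductive DTree (ι : Type) (L : Type) : Type
  | leaf (lab : L) : DTree ι L
  | node (i : ι) (t0 : DTree ι L) (t1 : DTree ι L) : DTree ι L

namespace DTree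

variable {ι L : Type}

/-- Output label at the leaf reached by input `x`. -/
def out : DTree ι L → (ι → Bool) → L
  | .leaf lab, _ => lab
  | .node i t0 t1, x => if x i then out t1 x else out t0 x

/-- Number of queries made on input `x` (depth of the leaf reached by `x`). -/
def cost : DTree ι L → (ι → Bool) → ℕ
  | .leaf _, _ => 0
  | .node i t0 t1, x => (if x i then cost t1 x else cost t0 x) + 1

/-- Maximum leaf depth of the tree. -/
def depth : DTree ι L → ℕ
  | .leaf _ => 0
  | .node _ t0 t1 => max (depth t0) (depth t1) + 1

/-- The set of inputs reaching the same leaf as input `x`. -/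
def leafSet : DTree ι L → (ι → Bool) → Set (ι → Bool)
  | .leaf _, _ => Set.univ
  | .node i t0 t1, x => {y | y i = x i} ∩ (if x i then leafSet t1 x else leafSet t0 x)

/-- Every leaf label of the tree satisfies the predicate `P`. -/
def allLabels : DTree ι L → (L → Prop) → Prop
  | .leaf lab, P => P lab
  | .node _ t0 t1, P => allLabels t0 P ∧ allLabels t1 P

end DTree

/-- A randomized query algorithm: a finitely supported probability distribution over
deterministic decision trees. -/
structure RandAlg (ι : Type) (L : Type) where
  k : ℕ
  p : Fin k → ℝ
  T : Fin k → DTree ι L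
  p_nonneg : ∀ j, 0 ≤ p j
  p_sum : ∑ j, p j = 1

/-- A probability distribution on inputs, supported inside the domain `X`. -/
structure InputDist (ι : Type) [Fintype ι] [DecidableEq ι] (X : Set (ι → Bool)) where
  μ : (ι → Bool) → ℝ
  nonneg : ∀ x, 0 ≤ μ x
  sum_one : ∑ x, μ x = 1
  supp : ∀ x, x ∉ X → μ x = 0

/-- A score function `φ : [0,1] → [1/2,1]`. -/
structure ScoreFun where
  φ : ℝ → ℝ
  continuous : ContinuousOn φ (Set.Icc 0 1)
  half_le : ∀ p ∈ Set.Icc (0:ℝ) 1, 1 / 2 ≤ φ p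
  le_one : ∀ p ∈ Set.Icc (0:ℝ) 1, φ p ≤ 1
  map_zero : φ 0 = 1
  map_one : φ 1 = 1
  map_half : φ (1 / 2) = 1 / 2
  symm : ∀ p ∈ Set.Icc (0:ℝ) 1, φ (1 - p) = φ p
  mono : MonotoneOn φ (Set.Icc (1 / 2) 1)

section Defs

variable {ι L : Type} [Fintype ι] [DecidableEq ι]

/-- Mass of a set of inputs under the weight function `μ`. -/
noncomputable def mass (μ : (ι → Bool) → ℝ) (S : Set (ι → Bool)) : ℝ :=
  ∑ x, Set.indicator S μ x

/-- Score `φ(μ(ℓ₁)/μ(ℓ))` of the leaf `ℓ` reached by `x` in the tree `t`. -/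
noncomputable def leafScore (S : ScoreFun) (f : (ι → Bool) → Bool) (μ : (ι → Bool) → ℝ)
    (t : DTree ι L) (x : ι → Bool) : ℝ :=
  S.φ (mass μ (t.leafSet x ∩ {y | f y = true}) / mass μ (t.leafSet x))

/-- Score of a randomized algorithm: `E_{D∼R, x∼μ}[score(D(x))]`. -/
noncomputable def algScore (S : ScoreFun) (f : (ι → Bool) → Bool) (μ : (ι → Bool) → ℝ)
    (R : RandAlg ι L) : ℝ :=
  ∑ j, R.p j * ∑ x, μ x * leafScore S f μ (R.T j) x

/-- Expected cost `E_{D∼R, x∼μ}[cost(D(x))]`. -/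
noncomputable def expCost (μ : (ι → Bool) → ℝ) (R : RandAlg ι L) : ℝ :=
  ∑ j, R.p j * ∑ x, μ x * ((R.T j).cost x : ℝ)

/-- Score-weighted cost `E[score(D(x))·cost(D(x))] / E[score(D(x))]`. -/
noncomputable def scost (S : ScoreFun) (f : (ι → Bool) → Bool) (μ : (ι → Bool) → ℝ)
    (R : RandAlg ι L) : ℝ :=
  (∑ j, R.p j * ∑ x, μ x * (leafScore S f μ (R.T j) x * ((R.T j).cost x : ℝ))) /
    algScore S f μ R

/-- Discounted score `E[score(D(x))·e^{-α·cost(D(x))}]`. -/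
noncomputable def dScore (S : ScoreFun) (f : (ι → Bool) → Bool) (μ : (ι → Bool) → ℝ)
    (α : ℝ) (R : RandAlg ι L) : ℝ :=
  ∑ j, R.p j * ∑ x, μ x *
    (leafScore S f μ (R.T j) x * Real.exp (-(α * ((R.T j).cost x : ℝ))))

/-- Maximum discounted score `DS_α^μ(f)`. -/
noncomputable def DS (S : ScoreFun) (f : (ι → Bool) → Bool) (μ : (ι → Bool) → ℝ)
    (α : ℝ) : ℝ :=
  ⨆ R : RandAlg ι Unit, dScore S f μ α R

/-- Distributional score-weighted query complexity `sR̄̄_γ^μ(f)`. -/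
noncomputable def sRdist (S : ScoreFun) (f : (ι → Bool) → Bool) (μ : (ι → Bool) → ℝ)
    (γ : ℝ) : ℝ :=
  sInf {c | ∃ R : RandAlg ι Unit, γ ≤ algScore S f μ R ∧ scost S f μ R = c}

/-- Distributional query complexity `R̄̄_γ^μ(f)` (expected cost). -/
noncomputable def Rdist (S : ScoreFun) (f : (ι → Bool) → Bool) (μ : (ι → Bool) → ℝ)
    (γ : ℝ) : ℝ :=
  sInf {c | ∃ R : RandAlg ι Unit, γ ≤ algScore S f μ R ∧ expCost μ R = c}

/-- Maximum score-weighted distributional query complexity `sR̄̄_γ(f)`. -/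
noncomputable def sRmax (S : ScoreFun) (X : Set (ι → Bool)) (f : (ι → Bool) → Bool)
    (γ : ℝ) : ℝ :=
  ⨆ μ : InputDist ι X, sRdist S f μ.μ γ

/-- Maximum distributional query complexity `R̄̄_γ(f)`. -/
noncomputable def Rmax (S : ScoreFun) (X : Set (ι → Bool)) (f : (ι → Bool) → Bool)
    (γ : ℝ) : ℝ :=
  ⨆ μ : InputDist ι X, Rdist S f μ.μ γ

/-- Success-probability score `max{μ(ℓ₀),μ(ℓ₁)}/μ(ℓ)` of the leaf reached by `x`. -/
noncomputable def succLeafScore (f : (ι → Bool) → Bool) (μ : (ι → Bool) → ℝ)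
    (t : DTree ι L) (x : ι → Bool) : ℝ :=
  max (mass μ (t.leafSet x ∩ {y | f y = false})) (mass μ (t.leafSet x ∩ {y | f y = true})) /
    mass μ (t.leafSet x)

/-- Success-probability score of a randomized algorithm. -/
noncomputable def succAlgScore (f : (ι → Bool) → Bool) (μ : (ι → Bool) → ℝ)
    (R : RandAlg ι L) : ℝ :=
  ∑ j, R.p j * ∑ x, μ x * succLeafScore f μ (R.T j) x

/-- Distributional query complexity with the success-probability score. -/
noncomputable def succRdist (f : (ι → Bool) → Bool) (μ : (ι → Bool) → ℝ) (γ : ℝ) : ℝ :=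
  sInf {c | ∃ R : RandAlg ι Unit, γ ≤ succAlgScore f μ R ∧ expCost μ R = c}

/-- Maximum distributional query complexity `R̄̄_γ(f)` with the success-probability score. -/
noncomputable def succRmax (X : Set (ι → Bool)) (f : (ι → Bool) → Bool) (γ : ℝ) : ℝ :=
  ⨆ μ : InputDist ι X, succRdist f μ.μ γ

/-- The fraction `q = μ(ℓ₁)/μ(ℓ)` at the leaf reached by `x`. -/
noncomputable def leafBias (f : (ι → Bool) → Bool) (μ : (ι → Bool) → ℝ)
    (t : DTree ι L) (x : ι → Bool) : ℝ :=
  mass μ (t.leafSet x ∩ {y | f y = true}) / mass μ (t.leafSet x)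

/-- Hellinger loss `E[2·√(q(1-q))]` of a randomized algorithm. -/
noncomputable def helLossAlg (f : (ι → Bool) → Bool) (μ : (ι → Bool) → ℝ)
    (R : RandAlg ι L) : ℝ :=
  ∑ j, R.p j * ∑ x, μ x *
    (2 * Real.sqrt (leafBias f μ (R.T j) x * (1 - leafBias f μ (R.T j) x)))

/-- Hellinger score `E[1 - √(q(1-q))]` of a randomized algorithm. -/
noncomputable def helScoreAlg (f : (ι → Bool) → Bool) (μ : (ι → Bool) → ℝ)
    (R : RandAlg ι L) : ℝ :=
  ∑ j, R.p j * ∑ x, μ x *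
    (1 - Real.sqrt (leafBias f μ (R.T j) x * (1 - leafBias f μ (R.T j) x)))

/-- `R̄̄_{Hel↓,ε}(f)`: maximum distributional complexity at Hellinger loss `ε`. -/
noncomputable def RmaxHelLoss (X : Set (ι → Bool)) (f : (ι → Bool) → Bool) (ε : ℝ) : ℝ :=
  ⨆ μ : InputDist ι X,
    sInf {c | ∃ R : RandAlg ι Unit, helLossAlg f μ.μ R ≤ ε ∧ expCost μ.μ R = c}

/-- `R̄̄_{Hel,γ}(f)`: maximum distributional complexity at Hellinger score `γ`. -/
noncomputable def RmaxHel (X : Set (ι → Bool)) (f : (ι → Bool) → Bool) (γ : ℝ) : ℝ :=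
  ⨆ μ : InputDist ι X,
    sInf {c | ∃ R : RandAlg ι Unit, γ ≤ helScoreAlg f μ.μ R ∧ expCost μ.μ R = c}

/-- Binary entropy function. -/
noncomputable def binEnt (p : ℝ) : ℝ :=
  -(p * Real.logb 2 p) - (1 - p) * Real.logb 2 (1 - p)

/-- Exponential-entropy score `E[1 - (1/2)·2^{-h(q)}]` of a randomized algorithm. -/
noncomputable def entScoreAlg (f : (ι → Bool) → Bool) (μ : (ι → Bool) → ℝ)
    (R : RandAlg ι L) : ℝ :=
  ∑ j, R.p j * ∑ x, μ x *
    (1 - (1 / 2) * (2:ℝ) ^ (-(binEnt (leafBias f μ (R.T j) x))))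

/-- `R̄̄_{Ent,γ}(f)`: maximum distributional complexity at exponential-entropy score `γ`. -/
noncomputable def RmaxEnt (X : Set (ι → Bool)) (f : (ι → Bool) → Bool) (γ : ℝ) : ℝ :=
  ⨆ μ : InputDist ι X,
    sInf {c | ∃ R : RandAlg ι Unit, γ ≤ entScoreAlg f μ.μ R ∧ expCost μ.μ R = c}

end Defs

section WorstCase

variable {ι L : Type}

open Classical in
/-- Worst-case randomized query complexity for a generic task: minimum, over randomized
algorithms whose leaf labels satisfy `labelOK` and which on every input `x ∈ X` output a
label `z` with `good x z` with probability at least `δ`, of the maximum leaf depth over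
the trees in the support. -/
noncomputable def RwcTask (X : Set (ι → Bool)) (good : (ι → Bool) → L → Prop)
    (labelOK : L → Prop) (δ : ℝ) : ℕ :=
  sInf {d : ℕ | ∃ R : RandAlg ι L,
    (∀ j, R.p j ≠ 0 → (R.T j).allLabels labelOK) ∧
    (∀ x ∈ X, δ ≤ ∑ j, if good x ((R.T j).out x) then R.p j else 0) ∧
    ∀ j, R.p j ≠ 0 → (R.T j).depth ≤ d}

/-- Worst-case randomized query complexity `R_δ(f)` of a (partial) Boolean function. -/
noncomputable def Rwc (X : Set (ι → Bool)) (f : (ι → Bool) → Bool) (δ : ℝ) : ℕ :=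
  RwcTask X (fun x b => b = f x) (fun _ : Bool => True) δ

end WorstCase

section Product

variable {m n : ℕ} {L : Type}

/-- The `i`-th block of an input to the `n`-fold direct product. -/
def block (x : Fin n × Fin m → Bool) (i : Fin n) : Fin m → Bool := fun j => x (i, j)

/-- The product domain `Xⁿ`. -/
def Xpow (n : ℕ) (X : Set (Fin m → Bool)) : Set (Fin n × Fin m → Bool) :=
  {x | ∀ i, block x i ∈ X}

/-- The `n`-fold direct product `fⁿ`. -/
def fpow (f : (Fin m → Bool) → Bool) (x : Fin n × Fin m → Bool) : Fin n → Bool :=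
  fun i => f (block x i)

/-- The product distribution `μⁿ`. -/
noncomputable def prodMu (μ : (Fin m → Bool) → ℝ) (x : Fin n × Fin m → Bool) : ℝ :=
  ∏ i, μ (block x i)

/-- The `i`-th factor `ℓ^(i)` of the (product) leaf reached by `x` in a decision tree for `fⁿ`. -/
def blockSet (t : DTree (Fin n × Fin m) L) (x : Fin n × Fin m → Bool) (i : Fin n) :
    Set (Fin m → Bool) :=
  {y | (fun q : Fin n × Fin m => if q.1 = i then y q.2 else x q) ∈ t.leafSet x}

/-- Score of a leaf of a tree for `fⁿ` under `μⁿ`: the product of the scores of its factors. -/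
noncomputable def prodLeafScore (S : ScoreFun) (f : (Fin m → Bool) → Bool)
    (μ : (Fin m → Bool) → ℝ) (t : DTree (Fin n × Fin m) L) (x : Fin n × Fin m → Bool) : ℝ :=
  ∏ i, S.φ (mass μ (blockSet t x i ∩ {y | f y = true}) / mass μ (blockSet t x i))

/-- Score of a randomized algorithm for `fⁿ` under `μⁿ`. -/
noncomputable def algScoreN (S : ScoreFun) (f : (Fin m → Bool) → Bool)
    (μ : (Fin m → Bool) → ℝ) (R : RandAlg (Fin n × Fin m) L) : ℝ :=
  ∑ j, R.p j * ∑ x, prodMu μ x * prodLeafScore S f μ (R.T j) x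

/-- Score-weighted cost of a randomized algorithm for `fⁿ` under `μⁿ`. -/
noncomputable def scostN (S : ScoreFun) (f : (Fin m → Bool) → Bool)
    (μ : (Fin m → Bool) → ℝ) (R : RandAlg (Fin n × Fin m) L) : ℝ :=
  (∑ j, R.p j * ∑ x, prodMu μ x * (prodLeafScore S f μ (R.T j) x * ((R.T j).cost x : ℝ))) /
    algScoreN S f μ R

/-- Discounted score of a randomized algorithm for `fⁿ` under `μⁿ`. -/
noncomputable def dScoreN (S : ScoreFun) (f : (Fin m → Bool) → Bool)
    (μ : (Fin m → Bool) → ℝ) (α : ℝ) (R : RandAlg (Fin n × Fin m) L) : ℝ :=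
  ∑ j, R.p j * ∑ x, prodMu μ x *
    (prodLeafScore S f μ (R.T j) x * Real.exp (-(α * ((R.T j).cost x : ℝ))))

/-- Maximum discounted score `DS_α^{μⁿ}(fⁿ)`. -/
noncomputable def DSN (S : ScoreFun) (f : (Fin m → Bool) → Bool)
    (μ : (Fin m → Bool) → ℝ) (α : ℝ) (n : ℕ) : ℝ :=
  ⨆ R : RandAlg (Fin n × Fin m) Unit, dScoreN S f μ α R

/-- Distributional score-weighted query complexity `sR̄̄_γ^{μⁿ}(fⁿ)`. -/
noncomputable def sRdistN (S : ScoreFun) (f : (Fin m → Bool) → Bool)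
    (μ : (Fin m → Bool) → ℝ) (γ : ℝ) (n : ℕ) : ℝ :=
  sInf {c | ∃ R : RandAlg (Fin n × Fin m) Unit,
    γ ≤ algScoreN S f μ R ∧ scostN S f μ R = c}

/-- Worst-case randomized query complexity `R_δ(fⁿ)` of computing `fⁿ` exactly. -/
noncomputable def RwcN (X : Set (Fin m → Bool)) (f : (Fin m → Bool) → Bool)
    (n : ℕ) (δ : ℝ) : ℕ :=
  RwcTask (Xpow n X) (fun x z => z = fpow f x) (fun _ : Fin n → Bool => True) δ

/-- Success-probability score `max_z μ(ℓ ∩ (fⁿ)⁻¹(z))/μ(ℓ)` of a leaf of a tree for `fⁿ`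
under an arbitrary distribution `μ` on `Xⁿ`. -/
noncomputable def succLeafScoreN (f : (Fin m → Bool) → Bool)
    (μ : (Fin n × Fin m → Bool) → ℝ) (t : DTree (Fin n × Fin m) L)
    (x : Fin n × Fin m → Bool) : ℝ :=
  (⨆ z : Fin n → Bool, mass μ (t.leafSet x ∩ {y | fpow f y = z})) / mass μ (t.leafSet x)

/-- Success-probability score of a randomized algorithm for `fⁿ`. -/
noncomputable def succAlgScoreN (f : (Fin m → Bool) → Bool)
    (μ : (Fin n × Fin m → Bool) → ℝ) (R : RandAlg (Fin n × Fin m) L) : ℝ :=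
  ∑ j, R.p j * ∑ x, μ x * succLeafScoreN f μ (R.T j) x

/-- Score-weighted cost of a randomized algorithm for `fⁿ` (success-probability score). -/
noncomputable def succScostN (f : (Fin m → Bool) → Bool)
    (μ : (Fin n × Fin m → Bool) → ℝ) (R : RandAlg (Fin n × Fin m) L) : ℝ :=
  (∑ j, R.p j * ∑ x, μ x * (succLeafScoreN f μ (R.T j) x * ((R.T j).cost x : ℝ))) /
    succAlgScoreN f μ R

/-- Maximum score-weighted distributional query complexity `sR̄̄_δ(fⁿ)`
(success-probability score). -/
noncomputable def succSRmaxN (X : Set (Fin m → Bool)) (f : (Fin m → Bool) → Bool)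
    (n : ℕ) (δ : ℝ) : ℝ :=
  ⨆ μ : InputDist (Fin n × Fin m) (Xpow n X),
    sInf {c | ∃ R : RandAlg (Fin n × Fin m) Unit,
      δ ≤ succAlgScoreN f μ.μ R ∧ succScostN f μ.μ R = c}

/-- Worst-case randomized query complexity of the list-decoding task `LD_ℓⁿ ∘ f`. -/
noncomputable def RwcLD (X : Set (Fin m → Bool)) (f : (Fin m → Bool) → Bool)
    (n ℓ : ℕ) (δ : ℝ) : ℕ :=
  RwcTask (Xpow n X) (fun x S => fpow f x ∈ S)
    (fun S : Finset (Fin n → Bool) => S.card = 2 ^ (n - ℓ)) δ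

open Classical in
/-- Worst-case randomized query complexity of the threshold task `Thr_kⁿ ∘ f`. -/
noncomputable def RwcThr (X : Set (Fin m → Bool)) (f : (Fin m → Bool) → Bool)
    (n k : ℕ) (δ : ℝ) : ℕ :=
  RwcTask (Xpow n X)
    (fun x z => k ≤ (Finset.univ.filter fun i => z i = fpow f x i).card)
    (fun _ : Fin n → Bool => True) δ

open Classical in
/-- Worst-case randomized query complexity of the labelled threshold task `Label_kⁿ ∘ f`. -/
noncomputable def RwcLabel (X : Set (Fin m → Bool)) (f : (Fin m → Bool) → Bool)
    (n k : ℕ) (δ : ℝ) : ℕ :=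
  RwcTask (Xpow n X)
    (fun x z => ∀ i b, z i = some b → fpow f x i = b)
    (fun z : Fin n → Option Bool =>
      (Finset.univ.filter fun i => (z i).isSome).card = k) δ

end Product

/-! ### Auxiliary lemmas for the boosting theorem -/

section Boosting

open Classical

variable {ι : Type} [Fintype ι] [DecidableEq ι]

set_option linter.unusedSectionVars false

namespace Boost

/-- pointwise: indicator value -/
lemma mass_nonneg (μ : (ι → Bool) → ℝ) (hμ : ∀ x, 0 ≤ μ x) (S : Set (ι → Bool)) :
    0 ≤ mass μ S := by
  refine Finset.sum_nonneg fun x _ => Set.indicator_apply_nonneg fun _ => hμ x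

lemma mass_univ (μ : (ι → Bool) → ℝ) : mass μ Set.univ = ∑ x, μ x := by
  simp [mass]

lemma mass_singleton (μ : (ι → Bool) → ℝ) (x : ι → Bool) : mass μ {x} = μ x := by
  classical
  unfold mass
  rw [Finset.sum_eq_single x]
  · simp
  · intro y _ hy; simp [Set.indicator, hy]
  · simp

lemma mass_split (μ : (ι → Bool) → ℝ) (f : (ι → Bool) → Bool) (S : Set (ι → Bool)) :
    mass μ (S ∩ {y | f y = false}) + mass μ (S ∩ {y | f y = true}) = mass μ S := by
  classical
  unfold mass
  rw [← Finset.sum_add_distrib]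
  refine Finset.sum_congr rfl fun x _ => ?_
  by_cases hS : x ∈ S
  · cases hf : f x <;> simp [Set.indicator, hS, hf]
  · simp [Set.indicator, hS]

/-- restriction of a weight function to `x i = b` -/
noncomputable def restr (μ : (ι → Bool) → ℝ) (i : ι) (b : Bool) : (ι → Bool) → ℝ :=
  fun x => if x i = b then μ x else 0

lemma restr_nonneg (μ : (ι → Bool) → ℝ) (hμ : ∀ x, 0 ≤ μ x) (i : ι) (b : Bool) :
    ∀ x, 0 ≤ restr μ i b x := by
  intro x; unfold restr; split
  · exact hμ x
  · exact le_refl 0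

lemma mass_restr (μ : (ι → Bool) → ℝ) (i : ι) (b : Bool) (S : Set (ι → Bool)) :
    mass μ ({y | y i = b} ∩ S) = mass (restr μ i b) S := by
  classical
  unfold mass restr
  refine Finset.sum_congr rfl fun x _ => ?_
  by_cases hS : x ∈ S <;> by_cases hb : x i = b <;>
    simp [Set.indicator, hS, hb, Set.mem_inter_iff]

lemma sum_restr_split (μ : (ι → Bool) → ℝ) (i : ι) (g : (ι → Bool) → ℝ) :
    ∑ x, μ x * g x = (∑ x, restr μ i false x * g x) + ∑ x, restr μ i true x * g x := by
  rw [← Finset.sum_add_distrib]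
  refine Finset.sum_congr rfl fun x _ => ?_
  cases hb : x i <;> simp [restr, hb]


section Tree

variable {L : Type}

lemma self_mem_leafSet (t : DTree ι L) (x : ι → Bool) : x ∈ t.leafSet x := by
  induction t with
  | leaf lab => simp [DTree.leafSet]
  | node i t0 t1 ih0 ih1 =>
    refine ⟨rfl, ?_⟩
    cases hb : x i <;> simp [hb] <;> [exact ih0; exact ih1]

lemma leafSet_eq_of_mem {t : DTree ι L} {x y : ι → Bool} (h : y ∈ t.leafSet x) :
    t.leafSet y = t.leafSet x := by
  induction t with
  | leaf lab => rfl
  | node i t0 t1 ih0 ih1 =>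
    obtain ⟨h1, h2⟩ := h
    have hyi : y i = x i := h1
    simp only [DTree.leafSet]
    rw [hyi]
    cases hb : x i <;> simp only [hb] at h2 ⊢ <;> simp at h2 ⊢
    · rw [ih0 h2]
    · rw [ih1 h2]

lemma mem_leafSet_update {t : DTree ι L} {x y : ι → Bool} (i : ι) (h : y ∈ t.leafSet x) :
    Function.update y i (x i) ∈ t.leafSet x := by
  induction t with
  | leaf lab => simp [DTree.leafSet]
  | node j t0 t1 ih0 ih1 =>
    obtain ⟨h1, h2⟩ := h
    refine ⟨?_, ?_⟩
    · show Function.update y i (x i) j = x j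
      rcases eq_or_ne j i with rfl | hji
      · simp
      · simpa [Function.update_apply, hji] using h1
    · cases hb : x j <;> simp only [hb] at h2 ⊢ <;> simp at h2 ⊢
      · exact ih0 h2
      · exact ih1 h2

end Tree

section Score

variable (f : (ι → Bool) → Bool)

/-- Optimal label of the leaf reached by `x`. -/
noncomputable def optLab (μ : (ι → Bool) → ℝ) (t : DTree ι Unit) (x : ι → Bool) : Bool :=
  decide (mass μ (t.leafSet x ∩ {y | f y = false}) ≤ mass μ (t.leafSet x ∩ {y | f y = true}))

/-- Correctness indicator of the optimal label. -/
noncomputable def corr (μ : (ι → Bool) → ℝ) (t : DTree ι Unit) (x : ι → Bool) : ℝ :=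
  if f x = optLab f μ t x then 1 else 0

lemma corr_nonneg (μ t x) : 0 ≤ corr f μ t x := by
  unfold corr; split <;> norm_num

lemma corr_le_one (μ t x) : corr f μ t x ≤ 1 := by
  unfold corr; split <;> norm_num

lemma optLab_eq_of_mem {μ : (ι → Bool) → ℝ} {t : DTree ι Unit} {x y : ι → Bool}
    (h : y ∈ t.leafSet x) : optLab f μ t y = optLab f μ t x := by
  unfold optLab; rw [leafSet_eq_of_mem h]

lemma leafSet_node (i : ι) (t0 t1 : DTree ι Unit) (x : ι → Bool) :
    (DTree.node i t0 t1).leafSet x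
      = {y | y i = x i} ∩ (if x i then t1 else t0).leafSet x := by
  show _ ∩ _ = _ ∩ _
  cases hb : x i <;> simp [hb]

lemma mass_leafSet_node (μ : (ι → Bool) → ℝ) (i : ι) (t0 t1 : DTree ι Unit)
    (x : ι → Bool) (S : Set (ι → Bool)) :
    mass μ ((DTree.node i t0 t1).leafSet x ∩ S)
      = mass (restr μ i (x i)) ((if x i then t1 else t0).leafSet x ∩ S) := by
  rw [leafSet_node, Set.inter_assoc, mass_restr]

lemma optLab_node (μ : (ι → Bool) → ℝ) (i : ι) (t0 t1 : DTree ι Unit) (x : ι → Bool) :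
    optLab f μ (DTree.node i t0 t1) x
      = optLab f (restr μ i (x i)) (if x i then t1 else t0) x := by
  unfold optLab; rw [mass_leafSet_node, mass_leafSet_node]

lemma corr_node (μ : (ι → Bool) → ℝ) (i : ι) (t0 t1 : DTree ι Unit) (x : ι → Bool) :
    corr f μ (DTree.node i t0 t1) x
      = corr f (restr μ i (x i)) (if x i then t1 else t0) x := by
  unfold corr; rw [optLab_node]

lemma succLeafScore_node (μ : (ι → Bool) → ℝ) (i : ι) (t0 t1 : DTree ι Unit)
    (x : ι → Bool) :
    succLeafScore f μ (DTree.node i t0 t1) x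
      = succLeafScore f (restr μ i (x i)) (if x i then t1 else t0) x := by
  unfold succLeafScore
  rw [mass_leafSet_node, mass_leafSet_node]
  have : mass μ ((DTree.node i t0 t1).leafSet x)
      = mass (restr μ i (x i)) ((if x i then t1 else t0).leafSet x) := by
    have := mass_leafSet_node μ i t0 t1 x Set.univ
    simpa using this
  rw [this]

end Score

section E12

variable (f : (ι → Bool) → Bool)

lemma sum_restr_congr (μ : (ι → Bool) → ℝ) (i : ι) (b : Bool) (g h : (ι → Bool) → ℝ)
    (hgh : ∀ x, x i = b → g x = h x) :
    ∑ x, restr μ i b x * g x = ∑ x, restr μ i b x * h x := by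
  refine Finset.sum_congr rfl fun x _ => ?_
  by_cases hx : x i = b
  · rw [hgh x hx]
  · simp [restr, hx]

lemma mass_ind (μ : (ι → Bool) → ℝ) (b : Bool) :
    mass μ (Set.univ ∩ {y | f y = b}) = ∑ x, μ x * (if f x = b then 1 else 0) := by
  unfold mass
  refine Finset.sum_congr rfl fun x _ => ?_
  by_cases hx : f x = b <;> simp [Set.indicator, hx]

lemma leafSet_leaf (lab : Unit) (x : ι → Bool) :
    (DTree.leaf lab : DTree ι Unit).leafSet x = Set.univ := rfl

lemma score_leaf_eval (μ : (ι → Bool) → ℝ) (hμ : ∀ x, 0 ≤ μ x) (lab : Unit) :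
    ∑ x, μ x * succLeafScore f μ (DTree.leaf lab) x
      = max (mass μ (Set.univ ∩ {y | f y = false})) (mass μ (Set.univ ∩ {y | f y = true})) ∨
    (∀ x, μ x = 0) := by
  by_cases hall : ∀ x, μ x = 0
  · exact Or.inr hall
  · left
    have hU : mass μ Set.univ ≠ 0 := by
      push_neg at hall
      obtain ⟨x₀, hx₀⟩ := hall
      have h1 : μ x₀ ≤ mass μ Set.univ := by
        rw [mass_univ]
        exact Finset.single_le_sum (fun x _ => hμ x) (Finset.mem_univ x₀)
      have h2 : 0 < μ x₀ := lt_of_le_of_ne (hμ x₀) (Ne.symm hx₀)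
      exact ne_of_gt (lt_of_lt_of_le h2 h1)
    have : ∀ x, succLeafScore f μ (DTree.leaf lab) x
        = max (mass μ (Set.univ ∩ {y | f y = false})) (mass μ (Set.univ ∩ {y | f y = true}))
          / mass μ Set.univ := by
      intro x; rfl
    calc ∑ x, μ x * succLeafScore f μ (DTree.leaf lab) x
        = (∑ x, μ x) * (max (mass μ (Set.univ ∩ {y | f y = false}))
            (mass μ (Set.univ ∩ {y | f y = true})) / mass μ Set.univ) := by
          rw [Finset.sum_mul]
          exact Finset.sum_congr rfl fun x _ => by rw [this x]
      _ = _ := by rw [← mass_univ]; field_simp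

/-- E1: average success score is at most average correctness of the optimal labels. -/
lemma score_le_corr : ∀ (t : DTree ι Unit) (μ : (ι → Bool) → ℝ), (∀ x, 0 ≤ μ x) →
    ∑ x, μ x * succLeafScore f μ t x ≤ ∑ x, μ x * corr f μ t x := by
  intro t
  induction t with
  | leaf lab =>
    intro μ hμ
    have hcorr : ∑ x, μ x * corr f μ (DTree.leaf lab) x
        = mass μ (Set.univ ∩ {y | f y = decide
            (mass μ (Set.univ ∩ {y | f y = false}) ≤ mass μ (Set.univ ∩ {y | f y = true}))}) := by
      rw [mass_ind]
      exact Finset.sum_congr rfl fun x _ => rfl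
    rcases score_leaf_eval f μ hμ lab with h | h
    · rw [h, hcorr]
      by_cases hle : mass μ (Set.univ ∩ {y | f y = false}) ≤ mass μ (Set.univ ∩ {y | f y = true})
      · rw [max_eq_right hle, decide_eq_true hle]
      · rw [max_eq_left (le_of_not_ge hle), decide_eq_false hle]
    · have h0 : ∀ g : (ι → Bool) → ℝ, ∑ x, μ x * g x = 0 := by
        intro g; refine Finset.sum_eq_zero fun x _ => by rw [h x, zero_mul]
      rw [h0, h0]
  | node i t0 t1 ih0 ih1 =>
    intro μ hμ
    rw [sum_restr_split μ i (succLeafScore f μ (DTree.node i t0 t1)),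
        sum_restr_split μ i (corr f μ (DTree.node i t0 t1))]
    refine add_le_add ?_ ?_
    · rw [sum_restr_congr μ i false (fun x => succLeafScore f μ (DTree.node i t0 t1) x) (fun x => succLeafScore f (restr μ i false) t0 x)
        (fun x hx => by show succLeafScore f μ (DTree.node i t0 t1) x = succLeafScore f (restr μ i false) t0 x
                        rw [succLeafScore_node, hx]; simp),
        sum_restr_congr μ i false (fun x => corr f μ (DTree.node i t0 t1) x) (fun x => corr f (restr μ i false) t0 x)
        (fun x hx => by show corr f μ (DTree.node i t0 t1) x = corr f (restr μ i false) t0 x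
                        rw [corr_node, hx]; simp)]
      exact ih0 (restr μ i false) (restr_nonneg μ hμ i false)
    · rw [sum_restr_congr μ i true (fun x => succLeafScore f μ (DTree.node i t0 t1) x) (fun x => succLeafScore f (restr μ i true) t1 x)
        (fun x hx => by show succLeafScore f μ (DTree.node i t0 t1) x = succLeafScore f (restr μ i true) t1 x
                        rw [succLeafScore_node, hx]; simp),
        sum_restr_congr μ i true (fun x => corr f μ (DTree.node i t0 t1) x) (fun x => corr f (restr μ i true) t1 x)
        (fun x hx => by show corr f μ (DTree.node i t0 t1) x = corr f (restr μ i true) t1 x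
                        rw [corr_node, hx]; simp)]
      exact ih1 (restr μ i true) (restr_nonneg μ hμ i true)

/-- E2: any leaf-measurable labelling is at most the average success score. -/
lemma lab_le_score : ∀ (t : DTree ι Unit) (μ : (ι → Bool) → ℝ), (∀ x, 0 ≤ μ x) →
    ∀ lab : (ι → Bool) → Bool,
    (∀ x y, μ x ≠ 0 → μ y ≠ 0 → y ∈ t.leafSet x → lab y = lab x) →
    ∑ x, μ x * (if f x = lab x then 1 else 0) ≤ ∑ x, μ x * succLeafScore f μ t x := by
  intro t
  induction t with
  | leaf l =>
    intro μ hμ lab hl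
    rcases score_leaf_eval f μ hμ l with h | h
    · rw [h]
      by_cases hall : ∀ x, μ x = 0
      · rw [Finset.sum_eq_zero fun x _ => by rw [hall x, zero_mul]]
        exact le_max_of_le_left (mass_nonneg μ hμ (Set.univ ∩ {y | f y = false}))
      · push_neg at hall
        obtain ⟨x₀, hx₀⟩ := hall
        have hcongr : ∑ x, μ x * (if f x = lab x then 1 else 0)
            = ∑ x, μ x * (if f x = lab x₀ then 1 else 0) := by
          refine Finset.sum_congr rfl fun x _ => ?_
          by_cases hx : μ x = 0
          · rw [hx, zero_mul, zero_mul]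
          · rw [hl x₀ x hx₀ hx (by exact Set.mem_univ x)]
        rw [hcongr, ← mass_ind]
        cases h0 : lab x₀
        · exact le_max_left _ _
        · exact le_max_right _ _
    · rw [Finset.sum_eq_zero fun x _ => by rw [h x, zero_mul],
          Finset.sum_eq_zero fun x _ => by rw [h x, zero_mul]]
  | node i t0 t1 ih0 ih1 =>
    intro μ hμ lab hl
    rw [sum_restr_split μ i (fun x => if f x = lab x then (1:ℝ) else 0),
        sum_restr_split μ i (succLeafScore f μ (DTree.node i t0 t1))]
    refine add_le_add ?_ ?_
    · rw [sum_restr_congr μ i false (fun x => succLeafScore f μ (DTree.node i t0 t1) x) (fun x => succLeafScore f (restr μ i false) t0 x)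
        (fun x hx => by show succLeafScore f μ (DTree.node i t0 t1) x = succLeafScore f (restr μ i false) t0 x
                        rw [succLeafScore_node, hx]; simp)]
      refine ih0 (restr μ i false) (restr_nonneg μ hμ i false) lab ?_
      intro x y hx hy hmem
      have hx' : x i = false ∧ μ x ≠ 0 := by
        by_contra hcon
        simp only [restr] at hx
        rcases Decidable.em (x i = false) with h'|h'
        · exact hcon ⟨h', by simpa [h'] using hx⟩
        · simp [h'] at hx
      have hy' : y i = false ∧ μ y ≠ 0 := by
        by_contra hcon
        simp only [restr] at hy
        rcases Decidable.em (y i = false) with h'|h'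
        · exact hcon ⟨h', by simpa [h'] using hy⟩
        · simp [h'] at hy
      refine hl x y hx'.2 hy'.2 ⟨?_, ?_⟩
      · show y i = x i
        rw [hx'.1, hy'.1]
      · rw [hx'.1]
        simpa using hmem
    · rw [sum_restr_congr μ i true (fun x => succLeafScore f μ (DTree.node i t0 t1) x) (fun x => succLeafScore f (restr μ i true) t1 x)
        (fun x hx => by show succLeafScore f μ (DTree.node i t0 t1) x = succLeafScore f (restr μ i true) t1 x
                        rw [succLeafScore_node, hx]; simp)]
      refine ih1 (restr μ i true) (restr_nonneg μ hμ i true) lab ?_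
      intro x y hx hy hmem
      have hx' : x i = true ∧ μ x ≠ 0 := by
        by_contra hcon
        simp only [restr] at hx
        rcases Decidable.em (x i = true) with h'|h'
        · exact hcon ⟨h', by simpa [h'] using hx⟩
        · simp [h'] at hx
      have hy' : y i = true ∧ μ y ≠ 0 := by
        by_contra hcon
        simp only [restr] at hy
        rcases Decidable.em (y i = true) with h'|h'
        · exact hcon ⟨h', by simpa [h'] using hy⟩
        · simp [h'] at hy
      refine hl x y hx'.2 hy'.2 ⟨?_, ?_⟩
      · show y i = x i
        rw [hx'.1, hy'.1]
      · rw [hx'.1]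
        simpa using hmem

end E12

section Graft

/-- Graft continuation trees at the leaves of `t`, passing a canonical representative
of the path to the continuation. -/
def graft : DTree ι Unit → ((ι → Bool) → DTree ι Unit) → DTree ι Unit
  | .leaf _, g => g (fun _ => false)
  | .node i t0 t1, g =>
      .node i (graft t0 (fun y => g (Function.update y i false)))
              (graft t1 (fun y => g (Function.update y i true)))

lemma graft_spec : ∀ (t : DTree ι Unit) (g : (ι → Bool) → DTree ι Unit) (x : ι → Bool),
    ∃ xh, xh ∈ t.leafSet x ∧
      (graft t g).cost x = t.cost x + (g xh).cost x ∧
      (graft t g).leafSet x = t.leafSet x ∩ (g xh).leafSet x := by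
  intro t
  induction t with
  | leaf lab =>
    intro g x
    refine ⟨fun _ => false, Set.mem_univ _, ?_, ?_⟩
    · simp [graft, DTree.cost]
    · simp [graft, DTree.leafSet, leafSet_leaf]
  | node i t0 t1 ih0 ih1 =>
    intro g x
    cases hxi : x i
    · obtain ⟨xh, hmem, hc, hl⟩ := ih0 (fun y => g (Function.update y i false)) x
      refine ⟨Function.update xh i false, ⟨?_, ?_⟩, ?_, ?_⟩
      · show Function.update xh i false i = x i
        rw [Function.update_self, hxi]
      · rw [hxi]
        simpa using (hxi ▸ mem_leafSet_update i hmem)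
      · show (if x i then _ else (graft t0 _).cost x) + 1 = _
        rw [hxi]
        simp only [Bool.false_eq_true, if_false, hc]
        show t0.cost x + (g (Function.update xh i false)).cost x + 1
          = (if x i then t1.cost x else t0.cost x) + 1 + (g (Function.update xh i false)).cost x
        rw [hxi]
        simp only [Bool.false_eq_true, if_false]
        omega
      · show {y | y i = x i} ∩ (if x i then _ else (graft t0 _).leafSet x) = _
        rw [hxi]
        simp only [Bool.false_eq_true, if_false, hl]
        rw [leafSet_node, hxi]
        simp only [Bool.false_eq_true, if_false]
        rw [Set.inter_assoc]
    · obtain ⟨xh, hmem, hc, hl⟩ := ih1 (fun y => g (Function.update y i true)) x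
      refine ⟨Function.update xh i true, ⟨?_, ?_⟩, ?_, ?_⟩
      · show Function.update xh i true i = x i
        rw [Function.update_self, hxi]
      · rw [hxi]
        simpa using (hxi ▸ mem_leafSet_update i hmem)
      · show (if x i then (graft t1 _).cost x else _) + 1 = _
        rw [hxi]
        simp only [if_true, hc]
        show t1.cost x + (g (Function.update xh i true)).cost x + 1
          = (if x i then t1.cost x else t0.cost x) + 1 + (g (Function.update xh i true)).cost x
        rw [hxi]
        simp only [if_true]
        omega
      · show {y | y i = x i} ∩ (if x i then (graft t1 _).leafSet x else _) = _
        rw [hxi]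
        simp only [if_true, hl]
        rw [leafSet_node, hxi]
        simp only [if_true]
        rw [Set.inter_assoc]

end Graft

section Pad

noncomputable def padP (R : RandAlg ι Unit) (K : ℕ) : Fin K → ℝ :=
  fun j => if hj : (j : ℕ) < R.k then R.p ⟨j, hj⟩ else 0

noncomputable def padT (R : RandAlg ι Unit) (K : ℕ) : Fin K → DTree ι Unit :=
  fun j => if hj : (j : ℕ) < R.k then R.T ⟨j, hj⟩ else .leaf ()

lemma pad_sum (R : RandAlg ι Unit) (K : ℕ) (h : R.k ≤ K)
    (F : ℝ → DTree ι Unit → ℝ) (hF : ∀ t, F 0 t = 0) :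
    ∑ j : Fin K, F (padP R K j) (padT R K j) = ∑ j : Fin R.k, F (R.p j) (R.T j) := by
  have step1 : ∑ j : Fin K, F (padP R K j) (padT R K j)
      = ∑ j : Fin K, (fun n : ℕ => if hn : n < R.k then F (R.p ⟨n, hn⟩) (R.T ⟨n, hn⟩) else 0) j := by
    refine Finset.sum_congr rfl fun j _ => ?_
    by_cases hj : (j : ℕ) < R.k
    · simp [padP, padT, hj]
    · simp [padP, padT, hj, hF]
  rw [step1, Fin.sum_univ_eq_sum_range (fun n => if hn : n < R.k then F (R.p ⟨n, hn⟩) (R.T ⟨n, hn⟩) else 0) K]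
  rw [← Finset.sum_subset (Finset.range_subset_range.mpr h)
    (fun n _ hn => by rw [Finset.mem_range] at hn; simp [hn])]
  rw [← Fin.sum_univ_eq_sum_range (fun n => if hn : n < R.k then F (R.p ⟨n, hn⟩) (R.T ⟨n, hn⟩) else 0) R.k]
  refine Finset.sum_congr rfl fun j _ => ?_
  simp

noncomputable def padAlg (R : RandAlg ι Unit) (K : ℕ) (h : R.k ≤ K) : RandAlg ι Unit where
  k := K
  p := padP R K
  T := padT R K
  p_nonneg := fun j => by
    unfold padP; split
    · exact R.p_nonneg _
    · exact le_refl 0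
  p_sum := by
    have := pad_sum R K h (fun p _ => p) (fun _ => rfl)
    simpa using this.trans R.p_sum

end Pad

section FullTree

def chain : List ι → DTree ι Unit
  | [] => .leaf ()
  | i :: l => .node i (chain l) (chain l)

lemma chain_cost (l : List ι) (x : ι → Bool) : (chain l).cost x = l.length := by
  induction l with
  | nil => rfl
  | cons i l ih =>
    show (if x i then (chain l).cost x else (chain l).cost x) + 1 = l.length + 1
    cases x i <;> simp [ih]

lemma chain_leafSet (l : List ι) (x : ι → Bool) :
    (chain l).leafSet x = {y | ∀ i ∈ l, y i = x i} := by
  induction l with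
  | nil =>
    show Set.univ = _
    ext y; simp
  | cons i l ih =>
    show {y | y i = x i} ∩ (if x i then (chain l).leafSet x else (chain l).leafSet x) = _
    have : (if x i then (chain l).leafSet x else (chain l).leafSet x) = (chain l).leafSet x := by
      cases x i <;> simp
    rw [this, ih]
    ext y
    simp only [Set.mem_inter_iff, Set.mem_setOf_eq, List.mem_cons]
    constructor
    · rintro ⟨h1, h2⟩ j (rfl | hj)
      · exact h1
      · exact h2 j hj
    · intro h
      exact ⟨h i (Or.inl rfl), fun j hj => h j (Or.inr hj)⟩

noncomputable def fullT : DTree ι Unit := chain (Finset.univ.toList (α := ι))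

lemma fullT_leafSet (x : ι → Bool) : (fullT (ι := ι)).leafSet x = {x} := by
  rw [fullT, chain_leafSet]
  ext y
  simp only [Set.mem_setOf_eq, Set.mem_singleton_iff]
  constructor
  · intro h
    funext i
    exact h i (by simp)
  · rintro rfl i _
    rfl

lemma fullT_cost (x : ι → Bool) : (fullT (ι := ι)).cost x = Fintype.card ι := by
  rw [fullT, chain_cost, Finset.length_toList, Finset.card_univ]

noncomputable def fullAlg : RandAlg ι Unit where
  k := 1
  p := fun _ => 1
  T := fun _ => fullT
  p_nonneg := fun _ => zero_le_one
  p_sum := by simp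

lemma fullAlg_score (f : (ι → Bool) → Bool) (μ : (ι → Bool) → ℝ)
    (hμ : ∀ x, 0 ≤ μ x) (hsum : ∑ x, μ x = 1) :
    succAlgScore f μ (fullAlg (ι := ι)) = 1 := by
  unfold succAlgScore fullAlg
  simp only [Finset.sum_const, Finset.card_univ, Fintype.card_fin, one_smul, one_mul]
  rw [← hsum]
  refine Finset.sum_congr rfl fun x _ => ?_
  by_cases hx : μ x = 0
  · rw [hx, zero_mul]
  · unfold succLeafScore
    rw [fullT_leafSet, mass_singleton]
    have hfb : ∀ b : Bool, mass μ ({x} ∩ {y | f y = b}) = if f x = b then μ x else 0 := by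
      intro b
      by_cases hf : f x = b
      · rw [show ({x} : Set (ι → Bool)) ∩ {y | f y = b} = {x} by
          ext z; simp only [Set.mem_inter_iff, Set.mem_singleton_iff, Set.mem_setOf_eq]
          exact ⟨fun h => h.1, fun h => ⟨h, h ▸ hf⟩⟩]
        rw [mass_singleton, if_pos hf]
      · rw [show ({x} : Set (ι → Bool)) ∩ {y | f y = b} = ∅ by
          refine Set.eq_empty_iff_forall_notMem.mpr ?_
          rintro z ⟨rfl, h2⟩
          exact hf h2]
        rw [if_neg hf]
        simp [mass]
    rw [hfb false, hfb true]
    cases hf : f x <;>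
      simp [hf, max_eq_left (hμ x), max_eq_right (hμ x), div_self hx]

lemma fullAlg_cost (μ : (ι → Bool) → ℝ) (hsum : ∑ x, μ x = 1) :
    expCost μ (fullAlg (ι := ι)) = Fintype.card ι := by
  unfold expCost fullAlg
  simp only [Finset.sum_const, Finset.card_univ, Fintype.card_fin, one_smul, one_mul]
  have : ∀ x : ι → Bool, μ x * ((fullT (ι := ι)).cost x : ℝ) = μ x * (Fintype.card ι : ℝ) := by
    intro x; rw [fullT_cost]
  rw [Finset.sum_congr rfl fun x _ => this x, ← Finset.sum_mul, hsum, one_mul]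

end FullTree

section Plumb

variable (f : (ι → Bool) → Bool)

/-- The achievable (score ≥ γ) cost set. -/
def SDS (μ : (ι → Bool) → ℝ) (γ : ℝ) : Set ℝ :=
  {c | ∃ R : RandAlg ι Unit, γ ≤ succAlgScore f μ R ∧ expCost μ R = c}

lemma succRdist_eq (μ : (ι → Bool) → ℝ) (γ : ℝ) :
    succRdist f μ γ = sInf (SDS f μ γ) := rfl

lemma expCost_nonneg (μ : (ι → Bool) → ℝ) (hμ : ∀ x, 0 ≤ μ x) (R : RandAlg ι Unit) :
    0 ≤ expCost μ R := by
  refine Finset.sum_nonneg fun j _ => mul_nonneg (R.p_nonneg j) ?_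
  exact Finset.sum_nonneg fun x _ => mul_nonneg (hμ x) (Nat.cast_nonneg _)

lemma SDS_bddBelow (μ : (ι → Bool) → ℝ) (hμ : ∀ x, 0 ≤ μ x) (γ : ℝ) :
    BddBelow (SDS f μ γ) := by
  refine ⟨0, ?_⟩
  rintro c ⟨R, _, rfl⟩
  exact expCost_nonneg μ hμ R

lemma SDS_mem_full (μ : (ι → Bool) → ℝ) (hμ : ∀ x, 0 ≤ μ x) (hsum : ∑ x, μ x = 1)
    {γ : ℝ} (hγ : γ ≤ 1) : (Fintype.card ι : ℝ) ∈ SDS f μ γ := by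
  exact ⟨fullAlg, by rw [fullAlg_score f μ hμ hsum]; exact hγ, fullAlg_cost μ hsum⟩

lemma succRdist_nonneg (μ : (ι → Bool) → ℝ) (hμ : ∀ x, 0 ≤ μ x) (γ : ℝ) :
    0 ≤ succRdist f μ γ := by
  rw [succRdist_eq]
  refine Real.sInf_nonneg ?_
  rintro c ⟨R, _, rfl⟩
  exact expCost_nonneg μ hμ R

lemma succRdist_le_card (μ : (ι → Bool) → ℝ) (hμ : ∀ x, 0 ≤ μ x) (hsum : ∑ x, μ x = 1)
    {γ : ℝ} (hγ : γ ≤ 1) : succRdist f μ γ ≤ Fintype.card ι := by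
  rw [succRdist_eq]
  exact csInf_le (SDS_bddBelow f μ hμ γ) (SDS_mem_full f μ hμ hsum hγ)

variable (X : Set (ι → Bool))

lemma succRmax_bddAbove {γ : ℝ} (hγ : γ ≤ 1) :
    BddAbove (Set.range fun μ : InputDist ι X => succRdist f μ.μ γ) := by
  refine ⟨Fintype.card ι, ?_⟩
  rintro _ ⟨μ, rfl⟩
  exact succRdist_le_card f μ.μ μ.nonneg μ.sum_one hγ

lemma le_succRmax {γ : ℝ} (hγ : γ ≤ 1) (μ : InputDist ι X) :
    succRdist f μ.μ γ ≤ succRmax X f γ :=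
  le_ciSup (succRmax_bddAbove f X hγ) μ

lemma succRmax_nonneg (γ : ℝ) : 0 ≤ succRmax X f γ :=
  Real.iSup_nonneg fun μ => succRdist_nonneg f μ.μ μ.nonneg γ

lemma exists_alg {γ : ℝ} (hγ : γ ≤ 1) (μ : InputDist ι X) {ε : ℝ} (hε : 0 < ε) :
    ∃ R : RandAlg ι Unit, γ ≤ succAlgScore f μ.μ R
      ∧ expCost μ.μ R ≤ succRmax X f γ + ε := by
  have hne : (SDS f μ.μ γ).Nonempty := ⟨_, SDS_mem_full f μ.μ μ.nonneg μ.sum_one hγ⟩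
  have hlt : sInf (SDS f μ.μ γ) < succRmax X f γ + ε := by
    have := le_succRmax f X hγ μ
    rw [succRdist_eq] at this
    linarith
  obtain ⟨c, ⟨R, hs, hcost⟩, hclt⟩ := exists_lt_of_csInf_lt hne hlt
  exact ⟨R, hs, by rw [hcost]; exact le_of_lt hclt⟩

lemma succRdist_le_of_alg (μ : (ι → Bool) → ℝ) (hμ : ∀ x, 0 ≤ μ x) (γ : ℝ)
    (R : RandAlg ι Unit) (hs : γ ≤ succAlgScore f μ R) :
    succRdist f μ γ ≤ expCost μ R := by
  rw [succRdist_eq]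
  exact csInf_le (SDS_bddBelow f μ hμ γ) ⟨R, hs, rfl⟩

end Plumb

section Comp

/-- Composed tree: run `t1`, then `t2`, then (if the leaf predicate `D` holds) `t3`. -/
noncomputable def compTree (t1 t2 t3 : DTree ι Unit) (D : (ι → Bool) → Bool) : DTree ι Unit :=
  graft (graft t1 (fun _ => t2)) (fun y => if D y then t3 else .leaf ())

lemma leafSet_graft_const (t1 t2 : DTree ι Unit) (x : ι → Bool) :
    (graft t1 (fun _ => t2)).leafSet x = t1.leafSet x ∩ t2.leafSet x ∧
    (graft t1 (fun _ => t2)).cost x = t1.cost x + t2.cost x := by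
  obtain ⟨x1, m1, hc1, hl1⟩ := graft_spec t1 (fun _ => t2) x
  exact ⟨hl1, hc1⟩

lemma compTree_spec (t1 t2 t3 : DTree ι Unit) (D : (ι → Bool) → Bool) (x : ι → Bool)
    (hD : ∀ y, y ∈ t1.leafSet x ∩ t2.leafSet x → D y = D x) :
    ((compTree t1 t2 t3 D).cost x : ℝ)
        = (t1.cost x : ℝ) + (t2.cost x : ℝ) + (if D x then (t3.cost x : ℝ) else 0) ∧
    (compTree t1 t2 t3 D).leafSet x
        = t1.leafSet x ∩ t2.leafSet x ∩ (if D x then t3.leafSet x else Set.univ) := by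
  classical
  obtain ⟨hl1, hc1⟩ := leafSet_graft_const t1 t2 x
  obtain ⟨x2, m2, hc2, hl2⟩ :=
    graft_spec (graft t1 (fun _ => t2)) (fun y => if D y then t3 else .leaf ()) x
  rw [hl1] at m2
  have hiff := hD x2 m2
  have hsub : (if D x2 then t3 else DTree.leaf ()) = (if D x then t3 else DTree.leaf ()) := by
    rw [hiff]
  constructor
  · show ((graft (graft t1 fun _ => t2) fun y => if D y then t3 else .leaf ()).cost x : ℝ) = _
    rw [hc2, hsub, hc1]
    by_cases hDx : D x = true
    · rw [if_pos hDx, if_pos hDx]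
      push_cast
      ring
    · rw [if_neg hDx, if_neg hDx]
      show ((t1.cost x + t2.cost x + (DTree.leaf () : DTree ι Unit).cost x : ℕ) : ℝ) = _
      simp [DTree.cost]
  · show (graft (graft t1 fun _ => t2) fun y => if D y then t3 else .leaf ()).leafSet x = _
    rw [hl2, hsub, hl1]
    by_cases hDx : D x = true
    · rw [if_pos hDx, if_pos hDx]
    · rw [if_neg hDx, if_neg hDx]
      show _ ∩ (DTree.leaf () : DTree ι Unit).leafSet x = _
      rw [leafSet_leaf]

/-- Pointwise label/correctness identities (case bash over Booleans). -/
lemma corr_ident (f : (ι → Bool) → Bool) (a b c : Bool) (fx : Bool) :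
    (if fx = (if (a ≠ b) then c else a) then (1:ℝ) else 0)
      = (if fx = a then (1:ℝ) else 0) * (if fx = b then (1:ℝ) else 0)
        + (if (a ≠ b) then (1:ℝ) else 0) * (if fx = c then (1:ℝ) else 0) := by
  cases a <;> cases b <;> cases c <;> cases fx <;> norm_num

lemma dind_ident (a b : Bool) (fx : Bool) :
    (if (a ≠ b) then (1:ℝ) else 0)
      = (if fx = a then (1:ℝ) else 0) + (if fx = b then (1:ℝ) else 0)
        - 2 * ((if fx = a then (1:ℝ) else 0) * (if fx = b then (1:ℝ) else 0)) := by
  cases a <;> cases b <;> cases fx <;> norm_num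

/-- Exchange of a weighted double sum. -/
lemma swap_weight {k : ℕ} (p : Fin k → ℝ) (μ : (ι → Bool) → ℝ)
    (g : Fin k → (ι → Bool) → ℝ) :
    ∑ j, p j * ∑ x, μ x * g j x = ∑ x, μ x * ∑ j, p j * g j x := by
  simp_rw [Finset.mul_sum]
  rw [Finset.sum_comm]
  refine Finset.sum_congr rfl fun x _ => Finset.sum_congr rfl fun j _ => by ring

end Comp

section Agg

variable (f : (ι → Bool) → Bool)

/-- Average correctness of the optimal labelling of a randomized algorithm. -/
noncomputable def cAvg (μ : (ι → Bool) → ℝ) (R : RandAlg ι Unit) : (ι → Bool) → ℝ :=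
  fun x => ∑ j, R.p j * corr f μ (R.T j) x

lemma cAvg_nonneg (μ : (ι → Bool) → ℝ) (R : RandAlg ι Unit) (x : ι → Bool) :
    0 ≤ cAvg f μ R x :=
  Finset.sum_nonneg fun j _ => mul_nonneg (R.p_nonneg j) (corr_nonneg f μ (R.T j) x)

lemma cAvg_le_one (μ : (ι → Bool) → ℝ) (R : RandAlg ι Unit) (x : ι → Bool) :
    cAvg f μ R x ≤ 1 := by
  calc cAvg f μ R x ≤ ∑ j, R.p j * 1 :=
        Finset.sum_le_sum fun j _ =>
          mul_le_mul_of_nonneg_left (corr_le_one f μ (R.T j) x) (R.p_nonneg j)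
    _ = 1 := by simpa using R.p_sum

lemma E1_agg (μ : (ι → Bool) → ℝ) (hμ : ∀ x, 0 ≤ μ x) (R : RandAlg ι Unit) :
    succAlgScore f μ R ≤ ∑ x, μ x * cAvg f μ R x := by
  unfold succAlgScore cAvg
  rw [← swap_weight]
  exact Finset.sum_le_sum fun j _ =>
    mul_le_mul_of_nonneg_left (score_le_corr f (R.T j) μ hμ) (R.p_nonneg j)

lemma corr_le_score_sum (t : DTree ι Unit) (μ : (ι → Bool) → ℝ) (hμ : ∀ x, 0 ≤ μ x) :
    ∑ x, μ x * corr f μ t x ≤ ∑ x, μ x * succLeafScore f μ t x := by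
  have := lab_le_score f t μ hμ (fun y => optLab f μ t y)
    (fun x y _ _ h => optLab_eq_of_mem f h)
  exact this

lemma E2_agg (μ : (ι → Bool) → ℝ) (hμ : ∀ x, 0 ≤ μ x) (R : RandAlg ι Unit) :
    ∑ x, μ x * cAvg f μ R x ≤ succAlgScore f μ R := by
  unfold succAlgScore cAvg
  rw [← swap_weight]
  exact Finset.sum_le_sum fun j _ =>
    mul_le_mul_of_nonneg_left (corr_le_score_sum f (R.T j) μ hμ) (R.p_nonneg j)

lemma padAlg_score (R : RandAlg ι Unit) (K : ℕ) (h : R.k ≤ K) (μ : (ι → Bool) → ℝ) :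
    succAlgScore f μ (padAlg R K h) = succAlgScore f μ R := by
  unfold succAlgScore
  exact pad_sum R K h (fun p t => p * ∑ x, μ x * succLeafScore f μ t x)
    (fun t => zero_mul _)

lemma padAlg_cost (R : RandAlg ι Unit) (K : ℕ) (h : R.k ≤ K) (μ : (ι → Bool) → ℝ) :
    expCost μ (padAlg R K h) = expCost μ R := by
  unfold expCost
  exact pad_sum R K h (fun p t => p * ∑ x, μ x * (t.cost x : ℝ)) (fun t => zero_mul _)

lemma expCost_le_double (μ ν : (ι → Bool) → ℝ) (h : ∀ x, μ x ≤ 2 * ν x)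
    (R : RandAlg ι Unit) : expCost μ R ≤ 2 * expCost ν R := by
  unfold expCost
  rw [Finset.mul_sum]
  refine Finset.sum_le_sum fun j _ => ?_
  rw [show 2 * (R.p j * ∑ x, ν x * ((R.T j).cost x : ℝ))
      = R.p j * (2 * ∑ x, ν x * ((R.T j).cost x : ℝ)) by ring]
  refine mul_le_mul_of_nonneg_left ?_ (R.p_nonneg j)
  rw [Finset.mul_sum]
  refine Finset.sum_le_sum fun x _ => ?_
  calc μ x * ((R.T j).cost x : ℝ) ≤ (2 * ν x) * ((R.T j).cost x : ℝ) :=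
        mul_le_mul_of_nonneg_right (h x) (Nat.cast_nonneg _)
    _ = 2 * (ν x * ((R.T j).cost x : ℝ)) := by ring

lemma sum_prod3 {k1 k2 K : ℕ} (a : Fin k1 → ℝ) (b : Fin k2 → ℝ)
    (c : Fin k1 → Fin k2 → Fin K → ℝ) (G : Fin k1 → Fin k2 → Fin K → ℝ) :
    ∑ q : Fin k1 × (Fin k2 × Fin K), (a q.1 * (b q.2.1 * c q.1 q.2.1 q.2.2))
        * G q.1 q.2.1 q.2.2
      = ∑ j1, a j1 * ∑ j2, b j2 * ∑ j3, c j1 j2 j3 * G j1 j2 j3 := by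
  rw [Fintype.sum_prod_type]
  refine Finset.sum_congr rfl fun j1 _ => ?_
  rw [Fintype.sum_prod_type, Finset.mul_sum]
  refine Finset.sum_congr rfl fun j2 _ => ?_
  rw [Finset.mul_sum, Finset.mul_sum]
  refine Finset.sum_congr rfl fun j3 _ => by ring

end Agg

section Stage3

variable (f : (ι → Bool) → Bool)

/-- Boolean disagreement predicate of the optimal labels of the two first-stage trees. -/
noncomputable def Dbool (μ μ2 : (ι → Bool) → ℝ) (t1 t2 : DTree ι Unit) :
    (ι → Bool) → Bool :=
  fun x => !(optLab f μ t1 x == optLab f μ2 t2 x)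

lemma Dbool_iff (μ μ2 : (ι → Bool) → ℝ) (t1 t2 : DTree ι Unit) (x : ι → Bool) :
    Dbool f μ μ2 t1 t2 x = true ↔ optLab f μ t1 x ≠ optLab f μ2 t2 x := by
  unfold Dbool
  cases optLab f μ t1 x <;> cases optLab f μ2 t2 x <;> simp

/-- Indicator that the optimal labels of the two first-stage trees disagree. -/
noncomputable def dind2 (μ μ2 : (ι → Bool) → ℝ) (t1 t2 : DTree ι Unit) :
    (ι → Bool) → ℝ :=
  fun x => if Dbool f μ μ2 t1 t2 x then 1 else 0

/-- Disagreement mass. -/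
noncomputable def Zm (μ μ2 : (ι → Bool) → ℝ) (t1 t2 : DTree ι Unit) : ℝ :=
  ∑ x, μ x * dind2 f μ μ2 t1 t2 x

/-- Conditional distribution on the disagreement region. -/
noncomputable def mu3 (μ μ2 : (ι → Bool) → ℝ) (t1 t2 : DTree ι Unit) :
    (ι → Bool) → ℝ :=
  fun x => μ x * dind2 f μ μ2 t1 t2 x / Zm f μ μ2 t1 t2

lemma dind2_nonneg (μ μ2 : (ι → Bool) → ℝ) (t1 t2 : DTree ι Unit) (x : ι → Bool) :
    0 ≤ dind2 f μ μ2 t1 t2 x := by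
  unfold dind2; split <;> norm_num

lemma dind2_le_one (μ μ2 : (ι → Bool) → ℝ) (t1 t2 : DTree ι Unit) (x : ι → Bool) :
    dind2 f μ μ2 t1 t2 x ≤ 1 := by
  unfold dind2; split <;> norm_num

lemma if_corr_eq (μ μ2 ν : (ι → Bool) → ℝ) (t1 t2 t3 : DTree ι Unit) (x : ι → Bool) :
    (if Dbool f μ μ2 t1 t2 x then corr f ν t3 x else corr f μ t1 x)
      = corr f μ t1 x * corr f μ2 t2 x + dind2 f μ μ2 t1 t2 x * corr f ν t3 x := by
  unfold corr dind2 Dbool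
  cases h1 : optLab f μ t1 x <;> cases h2 : optLab f μ2 t2 x <;>
    cases h3 : optLab f ν t3 x <;> cases hf : f x <;> norm_num

lemma dind2_eq (μ μ2 : (ι → Bool) → ℝ) (t1 t2 : DTree ι Unit) (x : ι → Bool) :
    dind2 f μ μ2 t1 t2 x
      = corr f μ t1 x + corr f μ2 t2 x - 2 * (corr f μ t1 x * corr f μ2 t2 x) := by
  unfold corr dind2 Dbool
  cases h1 : optLab f μ t1 x <;> cases h2 : optLab f μ2 t2 x <;> cases hf : f x <;> norm_num

lemma Zm_nonneg (μ μ2 : (ι → Bool) → ℝ) (hμ : ∀ x, 0 ≤ μ x) (t1 t2 : DTree ι Unit) :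
    0 ≤ Zm f μ μ2 t1 t2 :=
  Finset.sum_nonneg fun x _ => mul_nonneg (hμ x) (dind2_nonneg f μ μ2 t1 t2 x)

lemma Zm_le_one (μ μ2 : (ι → Bool) → ℝ) (hμ : ∀ x, 0 ≤ μ x) (hμ1 : ∑ x, μ x = 1)
    (t1 t2 : DTree ι Unit) : Zm f μ μ2 t1 t2 ≤ 1 := by
  unfold Zm
  rw [← hμ1]
  refine Finset.sum_le_sum fun x _ => ?_
  calc μ x * dind2 f μ μ2 t1 t2 x ≤ μ x * 1 :=
        mul_le_mul_of_nonneg_left (dind2_le_one f μ μ2 t1 t2 x) (hμ x)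
    _ = μ x := mul_one _

lemma mu3_nonneg (μ μ2 : (ι → Bool) → ℝ) (hμ : ∀ x, 0 ≤ μ x) (t1 t2 : DTree ι Unit)
    (x : ι → Bool) : 0 ≤ mu3 f μ μ2 t1 t2 x :=
  div_nonneg (mul_nonneg (hμ x) (dind2_nonneg f μ μ2 t1 t2 x)) (Zm_nonneg f μ μ2 hμ t1 t2)

lemma mu3_sum (μ μ2 : (ι → Bool) → ℝ) (t1 t2 : DTree ι Unit)
    (hZ : Zm f μ μ2 t1 t2 ≠ 0) : ∑ x, mu3 f μ μ2 t1 t2 x = 1 := by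
  unfold mu3
  rw [← Finset.sum_div]
  exact div_self hZ

lemma mu3_mul_Z (μ μ2 : (ι → Bool) → ℝ) (t1 t2 : DTree ι Unit)
    (hZ : Zm f μ μ2 t1 t2 ≠ 0) (x : ι → Bool) :
    Zm f μ μ2 t1 t2 * mu3 f μ μ2 t1 t2 x = μ x * dind2 f μ μ2 t1 t2 x := by
  unfold mu3
  field_simp

lemma mu_dind_zero (μ μ2 : (ι → Bool) → ℝ) (hμ : ∀ x, 0 ≤ μ x) (t1 t2 : DTree ι Unit)
    (hZ : Zm f μ μ2 t1 t2 = 0) (x : ι → Bool) : μ x * dind2 f μ μ2 t1 t2 x = 0 := by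
  have := (Finset.sum_eq_zero_iff_of_nonneg
    (fun y (_ : y ∈ Finset.univ) => mul_nonneg (hμ y) (dind2_nonneg f μ μ2 t1 t2 y))).mp hZ
  exact this x (Finset.mem_univ x)

end Stage3

section MoreSmall

variable (f : (ι → Bool) → Bool)

lemma cAvg_apply (μ : (ι → Bool) → ℝ) (R : RandAlg ι Unit) (x : ι → Bool) :
    cAvg f μ R x = ∑ j, R.p j * corr f μ (R.T j) x := rfl

lemma corr_mul_zero (μ μ2 ν : (ι → Bool) → ℝ) (t1 t2 : DTree ι Unit) (x : ι → Bool)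
    (hd : optLab f μ t1 x ≠ optLab f μ2 t2 x) :
    corr f μ t1 x * corr f μ2 t2 x = 0 := by
  unfold corr
  by_cases h1 : f x = optLab f μ t1 x
  · have h2 : f x ≠ optLab f μ2 t2 x := fun h2' => hd (by rw [← h1, ← h2'])
    rw [if_pos h1, if_neg h2, mul_zero]
  · rw [if_neg h1, zero_mul]

lemma corr_mul_eq (μ μ2 : (ι → Bool) → ℝ) (t1 t2 : DTree ι Unit) (x : ι → Bool)
    (he : optLab f μ t1 x = optLab f μ2 t2 x) :
    corr f μ t1 x = corr f μ t1 x * corr f μ2 t2 x := by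
  unfold corr
  rw [← he]
  by_cases h1 : f x = optLab f μ t1 x <;> simp [h1]

lemma sum_mul_add {n : ℕ} (p : Fin n → ℝ) (A B : Fin n → ℝ) (γ : ℝ) :
    ∑ j, p j * (A j + γ * B j) = (∑ j, p j * A j) + γ * ∑ j, p j * B j := by
  rw [Finset.mul_sum, ← Finset.sum_add_distrib]
  exact Finset.sum_congr rfl fun j _ => by ring

lemma sum_weight_add {n : ℕ} (p : Fin n → ℝ) (hp : ∑ j, p j = 1) (A : Fin n → ℝ) (c : ℝ) :
    ∑ j, p j * (A j + c) = (∑ j, p j * A j) + c := by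
  calc ∑ j, p j * (A j + c) = ∑ j, (p j * A j + p j * c) :=
        Finset.sum_congr rfl fun j _ => by ring
    _ = (∑ j, p j * A j) + (∑ j, p j) * c := by rw [Finset.sum_add_distrib, ← Finset.sum_mul]
    _ = (∑ j, p j * A j) + c := by rw [hp, one_mul]

lemma E1_agg_pad (ν : (ι → Bool) → ℝ) (hν : ∀ x, 0 ≤ ν x) (R : RandAlg ι Unit)
    (K : ℕ) (h : R.k ≤ K) :
    succAlgScore f ν R ≤ ∑ j3 : Fin K, padP R K j3 * ∑ x, ν x * corr f ν (padT R K j3) x := by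
  rw [← padAlg_score f R K h ν]
  refine le_trans (E1_agg f ν hν (padAlg R K h)) (le_of_eq ?_)
  exact (swap_weight (padP R K) ν (fun j x => corr f ν (padT R K j) x)).symm

lemma expCost_pad_eq (ν : (ι → Bool) → ℝ) (R : RandAlg ι Unit) (K : ℕ) (h : R.k ≤ K) :
    ∑ j3 : Fin K, padP R K j3 * ∑ x, ν x * ((padT R K j3).cost x : ℝ) = expCost ν R := by
  exact padAlg_cost R K h ν

end MoreSmall

section Composed

variable (f : (ι → Bool) → Bool)

set_option maxHeartbeats 1000000 in
lemma composed_exists (μ μ2 : (ι → Bool) → ℝ)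
    (hμ : ∀ x, 0 ≤ μ x) (hμ1 : ∑ x, μ x = 1)
    (R1 R2 : RandAlg ι Unit) (γ B : ℝ) (hB : 0 ≤ B)
    (hex : ∀ (j1 : Fin R1.k) (j2 : Fin R2.k), ∃ R3 : RandAlg ι Unit,
      Zm f μ μ2 (R1.T j1) (R2.T j2) ≠ 0 →
        (γ ≤ succAlgScore f (mu3 f μ μ2 (R1.T j1) (R2.T j2)) R3 ∧
         expCost (mu3 f μ μ2 (R1.T j1) (R2.T j2)) R3 ≤ B)) :
    ∃ Rstar : RandAlg ι Unit,
      ((∑ x, μ x * (cAvg f μ R1 x * cAvg f μ2 R2 x))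
        + γ * ∑ x, μ x * (cAvg f μ R1 x + cAvg f μ2 R2 x
            - 2 * (cAvg f μ R1 x * cAvg f μ2 R2 x))
        ≤ succAlgScore f μ Rstar)
      ∧ expCost μ Rstar ≤ expCost μ R1 + expCost μ R2 + B := by
  classical
  choose R3 hR3 using hex
  set K := Finset.univ.sup (fun jj : Fin R1.k × Fin R2.k => (R3 jj.1 jj.2).k) with hKdef
  have hKle : ∀ j1 j2, (R3 j1 j2).k ≤ K := fun j1 j2 =>
    Finset.le_sup (f := fun jj : Fin R1.k × Fin R2.k => (R3 jj.1 jj.2).k)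
      (Finset.mem_univ (j1, j2))
  -- third stage data (padded to a common support size)
  set p3 : Fin R1.k → Fin R2.k → Fin K → ℝ := fun j1 j2 => padP (R3 j1 j2) K with hp3def
  set T3 : Fin R1.k → Fin R2.k → Fin K → DTree ι Unit := fun j1 j2 => padT (R3 j1 j2) K
    with hT3def
  have hp3nn : ∀ j1 j2 j3, 0 ≤ p3 j1 j2 j3 := by
    intro j1 j2 j3
    show 0 ≤ padP (R3 j1 j2) K j3
    unfold padP
    split
    · exact (R3 j1 j2).p_nonneg _
    · exact le_refl 0
  have hp3sum : ∀ j1 j2, ∑ j3, p3 j1 j2 j3 = 1 := by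
    intro j1 j2
    have := pad_sum (R3 j1 j2) K (hKle j1 j2) (fun p _ => p) (fun _ => rfl)
    exact this.trans (R3 j1 j2).p_sum
  -- predicates
  set Dp : Fin R1.k → Fin R2.k → (ι → Bool) → Bool :=
    fun j1 j2 => Dbool f μ μ2 (R1.T j1) (R2.T j2) with hDpdef
  set ν3 : Fin R1.k → Fin R2.k → (ι → Bool) → ℝ :=
    fun j1 j2 => mu3 f μ μ2 (R1.T j1) (R2.T j2) with hν3def
  -- composed trees and weights
  set Tfun : Fin R1.k × (Fin R2.k × Fin K) → DTree ι Unit :=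
    fun q => compTree (R1.T q.1) (R2.T q.2.1) (T3 q.1 q.2.1 q.2.2) (Dp q.1 q.2.1) with hTfun
  set Pf : Fin R1.k × (Fin R2.k × Fin K) → ℝ :=
    fun q => R1.p q.1 * (R2.p q.2.1 * p3 q.1 q.2.1 q.2.2) with hPf
  have hPfnn : ∀ q, 0 ≤ Pf q := fun q =>
    mul_nonneg (R1.p_nonneg _) (mul_nonneg (R2.p_nonneg _) (hp3nn _ _ _))
  set e : (Fin R1.k × (Fin R2.k × Fin K)) ≃ Fin (R1.k * (R2.k * K)) :=
    ((Equiv.refl (Fin R1.k)).prodCongr finProdFinEquiv).trans finProdFinEquiv with hedef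
  have hPfsum : ∑ q, Pf q = 1 := by
    have h1 : ∑ q : Fin R1.k × (Fin R2.k × Fin K), Pf q
        = ∑ q : Fin R1.k × (Fin R2.k × Fin K),
            (R1.p q.1 * (R2.p q.2.1 * p3 q.1 q.2.1 q.2.2)) * (1:ℝ) := by
      refine Finset.sum_congr rfl fun q _ => by rw [mul_one]
    rw [h1, sum_prod3 R1.p R2.p (fun j1 j2 j3 => p3 j1 j2 j3) (fun _ _ _ => 1)]
    have h2 : ∀ (j1 : Fin R1.k) (j2 : Fin R2.k), ∑ j3, p3 j1 j2 j3 * (1:ℝ) = 1 := by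
      intro j1 j2
      simpa using hp3sum j1 j2
    calc ∑ j1, R1.p j1 * ∑ j2, R2.p j2 * ∑ j3, p3 j1 j2 j3 * (1:ℝ)
        = ∑ j1, R1.p j1 * ∑ j2, R2.p j2 * 1 := by
          refine Finset.sum_congr rfl fun j1 _ => ?_
          congr 1
          exact Finset.sum_congr rfl fun j2 _ => by rw [h2 j1 j2]
      _ = ∑ j1, R1.p j1 := by
          refine Finset.sum_congr rfl fun j1 _ => ?_
          rw [show (∑ j2, R2.p j2 * 1) = 1 by simpa using R2.p_sum, mul_one]
      _ = 1 := R1.p_sum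
  set Rstar : RandAlg ι Unit := ⟨R1.k * (R2.k * K), fun j => Pf (e.symm j),
    fun j => Tfun (e.symm j), fun j => hPfnn _,
    by rw [Equiv.sum_comp e.symm Pf]; exact hPfsum⟩ with hRstar
  -- structural facts about the composed trees
  have hDinv : ∀ (j1 : Fin R1.k) (j2 : Fin R2.k) (x y : ι → Bool),
      y ∈ (R1.T j1).leafSet x ∩ (R2.T j2).leafSet x → Dp j1 j2 y = Dp j1 j2 x := by
    rintro j1 j2 x y ⟨hy1, hy2⟩
    show (!(optLab f μ (R1.T j1) y == optLab f μ2 (R2.T j2) y))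
      = (!(optLab f μ (R1.T j1) x == optLab f μ2 (R2.T j2) x))
    rw [optLab_eq_of_mem f hy1, optLab_eq_of_mem f hy2]
  have hspecC : ∀ (q : Fin R1.k × (Fin R2.k × Fin K)) (x : ι → Bool),
      ((Tfun q).cost x : ℝ) = ((R1.T q.1).cost x : ℝ) + ((R2.T q.2.1).cost x : ℝ)
        + (if Dp q.1 q.2.1 x then ((T3 q.1 q.2.1 q.2.2).cost x : ℝ) else 0) := by
    intro q x
    exact (compTree_spec (R1.T q.1) (R2.T q.2.1) (T3 q.1 q.2.1 q.2.2) (Dp q.1 q.2.1) x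
      (fun y hy => hDinv q.1 q.2.1 x y hy)).1
  have hspecL : ∀ (q : Fin R1.k × (Fin R2.k × Fin K)) (x : ι → Bool),
      (Tfun q).leafSet x = (R1.T q.1).leafSet x ∩ (R2.T q.2.1).leafSet x
        ∩ (if Dp q.1 q.2.1 x then (T3 q.1 q.2.1 q.2.2).leafSet x else Set.univ) := by
    intro q x
    exact (compTree_spec (R1.T q.1) (R2.T q.2.1) (T3 q.1 q.2.1 q.2.2) (Dp q.1 q.2.1) x
      (fun y hy => hDinv q.1 q.2.1 x y hy)).2
  -- expansion of score and cost of the composed algorithm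
  have hSe : succAlgScore f μ Rstar
      = ∑ q, Pf q * (∑ x, μ x * succLeafScore f μ (Tfun q) x) := by
    calc succAlgScore f μ Rstar
        = ∑ j, Pf (e.symm j) * (∑ x, μ x * succLeafScore f μ (Tfun (e.symm j)) x) := rfl
      _ = _ := Equiv.sum_comp e.symm
            (fun q => Pf q * (∑ x, μ x * succLeafScore f μ (Tfun q) x))
  have hCe : expCost μ Rstar
      = ∑ q, Pf q * (∑ x, μ x * ((Tfun q).cost x : ℝ)) := by
    calc expCost μ Rstar
        = ∑ j, Pf (e.symm j) * (∑ x, μ x * ((Tfun (e.symm j)).cost x : ℝ)) := rfl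
      _ = _ := Equiv.sum_comp e.symm
            (fun q => Pf q * (∑ x, μ x * ((Tfun q).cost x : ℝ)))
  refine ⟨Rstar, ?_, ?_⟩
  · -- SCORE BOUND
    rw [hSe]
    set Sa : Fin R1.k → Fin R2.k → ℝ := fun j1 j2 =>
      ∑ x, μ x * (corr f μ (R1.T j1) x * corr f μ2 (R2.T j2) x) with hSadef
    set Sb : Fin R1.k → Fin R2.k → Fin K → ℝ := fun j1 j2 j3 =>
      ∑ x, μ x * (dind2 f μ μ2 (R1.T j1) (R2.T j2) x
        * corr f (ν3 j1 j2) (T3 j1 j2 j3) x) with hSbdef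
    set W3 : Fin R1.k → Fin R2.k → ℝ := fun j1 j2 =>
      ∑ j3, p3 j1 j2 j3 * Sb j1 j2 j3 with hW3def
    -- E2 for each composed tree
    have hkeyq : ∀ q : Fin R1.k × (Fin R2.k × Fin K),
        Sa q.1 q.2.1 + Sb q.1 q.2.1 q.2.2
          ≤ ∑ x, μ x * succLeafScore f μ (Tfun q) x := by
      intro q
      have hinv : ∀ x y, μ x ≠ 0 → μ y ≠ 0 → y ∈ (Tfun q).leafSet x →
          (fun y => if Dp q.1 q.2.1 y then optLab f (ν3 q.1 q.2.1) (T3 q.1 q.2.1 q.2.2) y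
            else optLab f μ (R1.T q.1) y) y
          = (fun y => if Dp q.1 q.2.1 y then optLab f (ν3 q.1 q.2.1) (T3 q.1 q.2.1 q.2.2) y
            else optLab f μ (R1.T q.1) y) x := by
        intro x y _ _ hmem
        rw [hspecL q x] at hmem
        obtain ⟨⟨h1, h2⟩, h3⟩ := hmem
        have hDeq : Dp q.1 q.2.1 y = Dp q.1 q.2.1 x := hDinv q.1 q.2.1 x y ⟨h1, h2⟩
        show (if Dp q.1 q.2.1 y then optLab f (ν3 q.1 q.2.1) (T3 q.1 q.2.1 q.2.2) y
            else optLab f μ (R1.T q.1) y)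
          = (if Dp q.1 q.2.1 x then optLab f (ν3 q.1 q.2.1) (T3 q.1 q.2.1 q.2.2) x
            else optLab f μ (R1.T q.1) x)
        by_cases hdx : Dp q.1 q.2.1 x = true
        · rw [if_pos (by rw [hDeq]; exact hdx), if_pos hdx]
          rw [if_pos hdx] at h3
          exact optLab_eq_of_mem f h3
        · rw [if_neg (by rw [hDeq]; exact hdx), if_neg hdx]
          exact optLab_eq_of_mem f h1
      have hlab := lab_le_score f (Tfun q) μ hμ
        (fun y => if Dp q.1 q.2.1 y then optLab f (ν3 q.1 q.2.1) (T3 q.1 q.2.1 q.2.2) y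
          else optLab f μ (R1.T q.1) y) hinv
      refine le_trans (le_of_eq ?_) hlab
      rw [hSadef, hSbdef]
      show (∑ x, μ x * (corr f μ (R1.T q.1) x * corr f μ2 (R2.T q.2.1) x))
          + ∑ x, μ x * (dind2 f μ μ2 (R1.T q.1) (R2.T q.2.1) x
              * corr f (ν3 q.1 q.2.1) (T3 q.1 q.2.1 q.2.2) x) = _
      rw [← Finset.sum_add_distrib]
      refine Finset.sum_congr rfl fun x _ => ?_
      show μ x * (corr f μ (R1.T q.1) x * corr f μ2 (R2.T q.2.1) x)
          + μ x * (dind2 f μ μ2 (R1.T q.1) (R2.T q.2.1) x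
            * corr f (ν3 q.1 q.2.1) (T3 q.1 q.2.1 q.2.2) x)
        = μ x * (if f x = (if Dp q.1 q.2.1 x
            then optLab f (ν3 q.1 q.2.1) (T3 q.1 q.2.1 q.2.2) x
            else optLab f μ (R1.T q.1) x) then 1 else 0)
      by_cases hd : Dp q.1 q.2.1 x = true
      · have hd1 : dind2 f μ μ2 (R1.T q.1) (R2.T q.2.1) x = 1 := if_pos hd
        have hz : corr f μ (R1.T q.1) x * corr f μ2 (R2.T q.2.1) x = 0 :=
          corr_mul_zero f μ μ2 (ν3 q.1 q.2.1) (R1.T q.1) (R2.T q.2.1) x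
            ((Dbool_iff f μ μ2 (R1.T q.1) (R2.T q.2.1) x).mp hd)
        rw [hd1, hz, if_pos hd]
        show μ x * 0 + μ x * (1 * corr f (ν3 q.1 q.2.1) (T3 q.1 q.2.1 q.2.2) x)
          = μ x * corr f (ν3 q.1 q.2.1) (T3 q.1 q.2.1 q.2.2) x
        ring
      · have hd0 : dind2 f μ μ2 (R1.T q.1) (R2.T q.2.1) x = 0 := if_neg hd
        have he : optLab f μ (R1.T q.1) x = optLab f μ2 (R2.T q.2.1) x :=
          not_not.mp (fun hne => hd ((Dbool_iff f μ μ2 (R1.T q.1) (R2.T q.2.1) x).mpr hne))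
        have hcc := corr_mul_eq f μ μ2 (R1.T q.1) (R2.T q.2.1) x he
        rw [hd0, if_neg hd, ← hcc]
        show μ x * corr f μ (R1.T q.1) x + μ x * (0 * corr f (ν3 q.1 q.2.1) (T3 q.1 q.2.1 q.2.2) x)
          = μ x * corr f μ (R1.T q.1) x
        ring
    -- lower bound for the third-stage score
    have hW3 : ∀ (j1 : Fin R1.k) (j2 : Fin R2.k),
        γ * Zm f μ μ2 (R1.T j1) (R2.T j2) ≤ W3 j1 j2 := by
      intro j1 j2
      by_cases hZ : Zm f μ μ2 (R1.T j1) (R2.T j2) = 0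
      · have hSb0 : ∀ j3, Sb j1 j2 j3 = 0 := by
          intro j3
          rw [hSbdef]
          refine Finset.sum_eq_zero fun x _ => ?_
          show μ x * (dind2 f μ μ2 (R1.T j1) (R2.T j2) x
            * corr f (ν3 j1 j2) (T3 j1 j2 j3) x) = 0
          rw [show μ x * (dind2 f μ μ2 (R1.T j1) (R2.T j2) x
              * corr f (ν3 j1 j2) (T3 j1 j2 j3) x)
            = (μ x * dind2 f μ μ2 (R1.T j1) (R2.T j2) x)
              * corr f (ν3 j1 j2) (T3 j1 j2 j3) x from by ring,
            mu_dind_zero f μ μ2 hμ (R1.T j1) (R2.T j2) hZ x, zero_mul]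
        have : W3 j1 j2 = 0 := by
          rw [hW3def]
          exact Finset.sum_eq_zero fun j3 _ => by rw [hSb0 j3, mul_zero]
        rw [this, hZ, mul_zero]
      · have hν3nn : ∀ x, 0 ≤ ν3 j1 j2 x := fun x =>
          mu3_nonneg f μ μ2 hμ (R1.T j1) (R2.T j2) x
        have hZnn : 0 ≤ Zm f μ μ2 (R1.T j1) (R2.T j2) :=
          Zm_nonneg f μ μ2 hμ (R1.T j1) (R2.T j2)
        have hchain : γ ≤ ∑ j3 : Fin K, p3 j1 j2 j3
            * ∑ x, ν3 j1 j2 x * corr f (ν3 j1 j2) (T3 j1 j2 j3) x := by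
          refine le_trans ((hR3 j1 j2 hZ).1) ?_
          exact E1_agg_pad f (ν3 j1 j2) hν3nn (R3 j1 j2) K (hKle j1 j2)
        have hW3eq : W3 j1 j2 = Zm f μ μ2 (R1.T j1) (R2.T j2)
            * ∑ j3 : Fin K, p3 j1 j2 j3
              * ∑ x, ν3 j1 j2 x * corr f (ν3 j1 j2) (T3 j1 j2 j3) x := by
          rw [hW3def, Finset.mul_sum]
          refine Finset.sum_congr rfl fun j3 _ => ?_
          rw [hSbdef]
          show p3 j1 j2 j3 * ∑ x, μ x * (dind2 f μ μ2 (R1.T j1) (R2.T j2) x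
              * corr f (ν3 j1 j2) (T3 j1 j2 j3) x) = _
          rw [show (∑ x, μ x * (dind2 f μ μ2 (R1.T j1) (R2.T j2) x
              * corr f (ν3 j1 j2) (T3 j1 j2 j3) x))
            = Zm f μ μ2 (R1.T j1) (R2.T j2)
              * ∑ x, ν3 j1 j2 x * corr f (ν3 j1 j2) (T3 j1 j2 j3) x from ?_]
          · ring
          · rw [Finset.mul_sum]
            refine Finset.sum_congr rfl fun x _ => ?_
            rw [show Zm f μ μ2 (R1.T j1) (R2.T j2)
                * (ν3 j1 j2 x * corr f (ν3 j1 j2) (T3 j1 j2 j3) x)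
              = (Zm f μ μ2 (R1.T j1) (R2.T j2) * mu3 f μ μ2 (R1.T j1) (R2.T j2) x)
                * corr f (ν3 j1 j2) (T3 j1 j2 j3) x from by rw [hν3def]; ring,
              mu3_mul_Z f μ μ2 (R1.T j1) (R2.T j2) hZ x]
            ring
        rw [hW3eq, mul_comm γ _]
        exact mul_le_mul_of_nonneg_left hchain hZnn
    -- evaluation of the first-stage aggregate
    have hSaEval : ∑ j1, R1.p j1 * ∑ j2, R2.p j2 * Sa j1 j2
        = ∑ x, μ x * (cAvg f μ R1 x * cAvg f μ2 R2 x) := by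
      have hinner : ∀ j1, ∑ j2, R2.p j2 * Sa j1 j2
          = ∑ x, (μ x * corr f μ (R1.T j1) x) * cAvg f μ2 R2 x := by
        intro j1
        have hs := swap_weight R2.p (fun x => μ x * corr f μ (R1.T j1) x)
          (fun j2 x => corr f μ2 (R2.T j2) x)
        calc ∑ j2, R2.p j2 * Sa j1 j2
            = ∑ j2, R2.p j2 * ∑ x, (μ x * corr f μ (R1.T j1) x)
                * corr f μ2 (R2.T j2) x := by
              refine Finset.sum_congr rfl fun j2 _ => ?_
              rw [hSadef]
              congr 1
              exact Finset.sum_congr rfl fun x _ => by ring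
          _ = ∑ x, (μ x * corr f μ (R1.T j1) x)
                * ∑ j2, R2.p j2 * corr f μ2 (R2.T j2) x := hs
          _ = _ := by
              refine Finset.sum_congr rfl fun x _ => ?_
              rw [cAvg_apply]
      calc ∑ j1, R1.p j1 * ∑ j2, R2.p j2 * Sa j1 j2
          = ∑ j1, R1.p j1 * ∑ x, (μ x * cAvg f μ2 R2 x) * corr f μ (R1.T j1) x := by
            refine Finset.sum_congr rfl fun j1 _ => ?_
            rw [hinner j1]
            congr 1
            exact Finset.sum_congr rfl fun x _ => by ring
        _ = ∑ x, (μ x * cAvg f μ2 R2 x) * ∑ j1, R1.p j1 * corr f μ (R1.T j1) x :=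
            swap_weight R1.p (fun x => μ x * cAvg f μ2 R2 x)
              (fun j1 x => corr f μ (R1.T j1) x)
        _ = _ := by
            refine Finset.sum_congr rfl fun x _ => ?_
            rw [← cAvg_apply f μ R1 x]
            ring
    -- evaluation of the aggregate disagreement mass
    have hZZ : ∑ j1, R1.p j1 * ∑ j2, R2.p j2 * Zm f μ μ2 (R1.T j1) (R2.T j2)
        = ∑ x, μ x * (cAvg f μ R1 x + cAvg f μ2 R2 x
            - 2 * (cAvg f μ R1 x * cAvg f μ2 R2 x)) := by
      have hinner : ∀ j1, ∑ j2, R2.p j2 * Zm f μ μ2 (R1.T j1) (R2.T j2)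
          = ∑ x, μ x * (corr f μ (R1.T j1) x + cAvg f μ2 R2 x
              - 2 * (corr f μ (R1.T j1) x * cAvg f μ2 R2 x)) := by
        intro j1
        have hs := swap_weight R2.p μ
          (fun j2 x => dind2 f μ μ2 (R1.T j1) (R2.T j2) x)
        calc ∑ j2, R2.p j2 * Zm f μ μ2 (R1.T j1) (R2.T j2)
            = ∑ x, μ x * ∑ j2, R2.p j2 * dind2 f μ μ2 (R1.T j1) (R2.T j2) x := hs
          _ = _ := by
              refine Finset.sum_congr rfl fun x _ => ?_
              congr 1
              calc ∑ j2, R2.p j2 * dind2 f μ μ2 (R1.T j1) (R2.T j2) x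
                  = ∑ j2, (R2.p j2 * corr f μ (R1.T j1) x
                      + (R2.p j2 * corr f μ2 (R2.T j2) x)
                        * (1 - 2 * corr f μ (R1.T j1) x)) := by
                    refine Finset.sum_congr rfl fun j2 _ => ?_
                    rw [dind2_eq]
                    ring
                _ = (∑ j2, R2.p j2) * corr f μ (R1.T j1) x
                      + (∑ j2, R2.p j2 * corr f μ2 (R2.T j2) x)
                        * (1 - 2 * corr f μ (R1.T j1) x) := by
                    rw [Finset.sum_add_distrib, ← Finset.sum_mul, ← Finset.sum_mul]
                _ = _ := by
                    rw [R2.p_sum, ← cAvg_apply]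
                    ring
      calc ∑ j1, R1.p j1 * ∑ j2, R2.p j2 * Zm f μ μ2 (R1.T j1) (R2.T j2)
          = ∑ j1, R1.p j1 * ∑ x, (μ x) * (cAvg f μ2 R2 x
              + corr f μ (R1.T j1) x * (1 - 2 * cAvg f μ2 R2 x)) := by
            refine Finset.sum_congr rfl fun j1 _ => ?_
            rw [hinner j1]
            congr 1
            exact Finset.sum_congr rfl fun x _ => by ring
        _ = ∑ x, μ x * ∑ j1, R1.p j1 * (cAvg f μ2 R2 x
              + corr f μ (R1.T j1) x * (1 - 2 * cAvg f μ2 R2 x)) :=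
            swap_weight R1.p μ _
        _ = _ := by
            refine Finset.sum_congr rfl fun x _ => ?_
            congr 1
            calc ∑ j1, R1.p j1 * (cAvg f μ2 R2 x
                  + corr f μ (R1.T j1) x * (1 - 2 * cAvg f μ2 R2 x))
                = ∑ j1, (R1.p j1 * cAvg f μ2 R2 x
                    + (R1.p j1 * corr f μ (R1.T j1) x) * (1 - 2 * cAvg f μ2 R2 x)) := by
                  refine Finset.sum_congr rfl fun j1 _ => by ring
              _ = (∑ j1, R1.p j1) * cAvg f μ2 R2 x
                    + (∑ j1, R1.p j1 * corr f μ (R1.T j1) x)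
                      * (1 - 2 * cAvg f μ2 R2 x) := by
                  rw [Finset.sum_add_distrib, ← Finset.sum_mul, ← Finset.sum_mul]
              _ = _ := by
                  rw [R1.p_sum, ← cAvg_apply]
                  ring
    -- the triple-sum expansion
    have hsum3 : ∑ q, Pf q * (Sa q.1 q.2.1 + Sb q.1 q.2.1 q.2.2)
        = ∑ j1, R1.p j1 * ∑ j2, R2.p j2 * (Sa j1 j2 + W3 j1 j2) := by
      have h0 : ∑ q : Fin R1.k × (Fin R2.k × Fin K),
          Pf q * (Sa q.1 q.2.1 + Sb q.1 q.2.1 q.2.2)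
        = ∑ q : Fin R1.k × (Fin R2.k × Fin K),
          (R1.p q.1 * (R2.p q.2.1 * p3 q.1 q.2.1 q.2.2))
            * (Sa q.1 q.2.1 + Sb q.1 q.2.1 q.2.2) := by
        refine Finset.sum_congr rfl fun q _ => ?_
        rw [hPf]
      rw [h0, sum_prod3 R1.p R2.p (fun j1 j2 j3 => p3 j1 j2 j3)
        (fun j1 j2 j3 => Sa j1 j2 + Sb j1 j2 j3)]
      refine Finset.sum_congr rfl fun j1 _ => ?_
      congr 1
      refine Finset.sum_congr rfl fun j2 _ => ?_
      congr 1
      calc ∑ j3, p3 j1 j2 j3 * (Sa j1 j2 + Sb j1 j2 j3)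
          = ∑ j3, (p3 j1 j2 j3 * Sa j1 j2 + p3 j1 j2 j3 * Sb j1 j2 j3) := by
            refine Finset.sum_congr rfl fun j3 _ => by ring
        _ = (∑ j3, p3 j1 j2 j3) * Sa j1 j2 + W3 j1 j2 := by
            rw [Finset.sum_add_distrib, ← Finset.sum_mul, hW3def]
        _ = Sa j1 j2 + W3 j1 j2 := by rw [hp3sum j1 j2, one_mul]
    -- put everything together
    calc (∑ x, μ x * (cAvg f μ R1 x * cAvg f μ2 R2 x))
          + γ * ∑ x, μ x * (cAvg f μ R1 x + cAvg f μ2 R2 x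
              - 2 * (cAvg f μ R1 x * cAvg f μ2 R2 x))
        = ∑ j1, R1.p j1 * ∑ j2, R2.p j2
            * (Sa j1 j2 + γ * Zm f μ μ2 (R1.T j1) (R2.T j2)) := by
          rw [← hSaEval, ← hZZ]
          rw [show (∑ j1, R1.p j1 * ∑ j2, R2.p j2
              * (Sa j1 j2 + γ * Zm f μ μ2 (R1.T j1) (R2.T j2)))
            = ∑ j1, R1.p j1 * ((∑ j2, R2.p j2 * Sa j1 j2)
              + γ * ∑ j2, R2.p j2 * Zm f μ μ2 (R1.T j1) (R2.T j2)) from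
            Finset.sum_congr rfl fun j1 _ => by rw [sum_mul_add R2.p _ _ γ],
            sum_mul_add R1.p _ _ γ]
      _ ≤ ∑ j1, R1.p j1 * ∑ j2, R2.p j2 * (Sa j1 j2 + W3 j1 j2) := by
          refine Finset.sum_le_sum fun j1 _ => ?_
          refine mul_le_mul_of_nonneg_left ?_ (R1.p_nonneg j1)
          refine Finset.sum_le_sum fun j2 _ => ?_
          refine mul_le_mul_of_nonneg_left ?_ (R2.p_nonneg j2)
          exact add_le_add (le_refl _) (hW3 j1 j2)
      _ = ∑ q, Pf q * (Sa q.1 q.2.1 + Sb q.1 q.2.1 q.2.2) := hsum3.symm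
      _ ≤ ∑ q, Pf q * (∑ x, μ x * succLeafScore f μ (Tfun q) x) :=
          Finset.sum_le_sum fun q _ =>
            mul_le_mul_of_nonneg_left (hkeyq q) (hPfnn q)
  · -- COST BOUND
    rw [hCe]
    set A1 : Fin R1.k → ℝ := fun j1 => ∑ x, μ x * ((R1.T j1).cost x : ℝ) with hA1
    set A2 : Fin R2.k → ℝ := fun j2 => ∑ x, μ x * ((R2.T j2).cost x : ℝ) with hA2
    set CW : Fin R1.k → Fin R2.k → Fin K → ℝ := fun j1 j2 j3 =>
      ∑ x, (μ x * dind2 f μ μ2 (R1.T j1) (R2.T j2) x) * ((T3 j1 j2 j3).cost x : ℝ)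
      with hCW
    have hCsplit : ∀ q : Fin R1.k × (Fin R2.k × Fin K),
        (∑ x, μ x * ((Tfun q).cost x : ℝ))
          = A1 q.1 + A2 q.2.1 + CW q.1 q.2.1 q.2.2 := by
      intro q
      rw [hA1, hA2, hCW]
      show _ = (∑ x, μ x * ((R1.T q.1).cost x : ℝ))
        + (∑ x, μ x * ((R2.T q.2.1).cost x : ℝ))
        + ∑ x, (μ x * dind2 f μ μ2 (R1.T q.1) (R2.T q.2.1) x)
            * ((T3 q.1 q.2.1 q.2.2).cost x : ℝ)
      rw [← Finset.sum_add_distrib, ← Finset.sum_add_distrib]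
      refine Finset.sum_congr rfl fun x _ => ?_
      rw [hspecC q x]
      by_cases hd : Dp q.1 q.2.1 x = true
      · have hd1 : dind2 f μ μ2 (R1.T q.1) (R2.T q.2.1) x = 1 := if_pos hd
        rw [if_pos hd, hd1]
        ring
      · have hd0 : dind2 f μ μ2 (R1.T q.1) (R2.T q.2.1) x = 0 := if_neg hd
        rw [if_neg hd, hd0]
        ring
    have hTC : ∀ (j1 : Fin R1.k) (j2 : Fin R2.k),
        ∑ j3, p3 j1 j2 j3 * CW j1 j2 j3 ≤ B := by
      intro j1 j2
      by_cases hZ : Zm f μ μ2 (R1.T j1) (R2.T j2) = 0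
      · have : ∀ j3, CW j1 j2 j3 = 0 := by
          intro j3
          rw [hCW]
          refine Finset.sum_eq_zero fun x _ => ?_
          show (μ x * dind2 f μ μ2 (R1.T j1) (R2.T j2) x) * _ = 0
          rw [mu_dind_zero f μ μ2 hμ (R1.T j1) (R2.T j2) hZ x, zero_mul]
        rw [Finset.sum_eq_zero fun j3 _ => by rw [this j3, mul_zero]]
        exact hB
      · have hZnn : 0 ≤ Zm f μ μ2 (R1.T j1) (R2.T j2) :=
          Zm_nonneg f μ μ2 hμ (R1.T j1) (R2.T j2)
        have hZ1 : Zm f μ μ2 (R1.T j1) (R2.T j2) ≤ 1 :=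
          Zm_le_one f μ μ2 hμ hμ1 (R1.T j1) (R2.T j2)
        have heq : ∑ j3, p3 j1 j2 j3 * CW j1 j2 j3
            = Zm f μ μ2 (R1.T j1) (R2.T j2) * expCost (ν3 j1 j2) (R3 j1 j2) := by
          rw [← expCost_pad_eq (ν3 j1 j2) (R3 j1 j2) K (hKle j1 j2), Finset.mul_sum]
          refine Finset.sum_congr rfl fun j3 _ => ?_
          rw [hCW]
          show p3 j1 j2 j3 * ∑ x, (μ x * dind2 f μ μ2 (R1.T j1) (R2.T j2) x)
              * ((T3 j1 j2 j3).cost x : ℝ) = _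
          rw [show (∑ x, (μ x * dind2 f μ μ2 (R1.T j1) (R2.T j2) x)
              * ((T3 j1 j2 j3).cost x : ℝ))
            = Zm f μ μ2 (R1.T j1) (R2.T j2)
              * ∑ x, ν3 j1 j2 x * ((T3 j1 j2 j3).cost x : ℝ) from ?_]
          · rw [hT3def]
            ring
          · rw [Finset.mul_sum]
            refine Finset.sum_congr rfl fun x _ => ?_
            rw [show Zm f μ μ2 (R1.T j1) (R2.T j2)
                * (ν3 j1 j2 x * ((T3 j1 j2 j3).cost x : ℝ))
              = (Zm f μ μ2 (R1.T j1) (R2.T j2) * mu3 f μ μ2 (R1.T j1) (R2.T j2) x)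
                * ((T3 j1 j2 j3).cost x : ℝ) from by rw [hν3def]; ring,
              mu3_mul_Z f μ μ2 (R1.T j1) (R2.T j2) hZ x]
        rw [heq]
        calc Zm f μ μ2 (R1.T j1) (R2.T j2) * expCost (ν3 j1 j2) (R3 j1 j2)
            ≤ Zm f μ μ2 (R1.T j1) (R2.T j2) * B :=
              mul_le_mul_of_nonneg_left ((hR3 j1 j2 hZ).2) hZnn
          _ ≤ 1 * B := mul_le_mul_of_nonneg_right hZ1 hB
          _ = B := one_mul B
    have hsum3c : ∑ q, Pf q * (∑ x, μ x * ((Tfun q).cost x : ℝ))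
        = ∑ j1, R1.p j1 * ∑ j2, R2.p j2
            * (A1 j1 + A2 j2 + ∑ j3, p3 j1 j2 j3 * CW j1 j2 j3) := by
      have h0 : ∑ q : Fin R1.k × (Fin R2.k × Fin K),
          Pf q * (∑ x, μ x * ((Tfun q).cost x : ℝ))
        = ∑ q : Fin R1.k × (Fin R2.k × Fin K),
          (R1.p q.1 * (R2.p q.2.1 * p3 q.1 q.2.1 q.2.2))
            * (A1 q.1 + A2 q.2.1 + CW q.1 q.2.1 q.2.2) := by
        refine Finset.sum_congr rfl fun q _ => ?_
        rw [hPf, hCsplit q]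
      rw [h0, sum_prod3 R1.p R2.p (fun j1 j2 j3 => p3 j1 j2 j3)
        (fun j1 j2 j3 => A1 j1 + A2 j2 + CW j1 j2 j3)]
      refine Finset.sum_congr rfl fun j1 _ => ?_
      congr 1
      refine Finset.sum_congr rfl fun j2 _ => ?_
      congr 1
      calc ∑ j3, p3 j1 j2 j3 * (A1 j1 + A2 j2 + CW j1 j2 j3)
          = ∑ j3, (p3 j1 j2 j3 * (A1 j1 + A2 j2) + p3 j1 j2 j3 * CW j1 j2 j3) := by
            refine Finset.sum_congr rfl fun j3 _ => by ring
        _ = (∑ j3, p3 j1 j2 j3) * (A1 j1 + A2 j2) + ∑ j3, p3 j1 j2 j3 * CW j1 j2 j3 := by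
            rw [Finset.sum_add_distrib, ← Finset.sum_mul]
        _ = _ := by rw [hp3sum j1 j2, one_mul]
    rw [hsum3c]
    calc ∑ j1, R1.p j1 * ∑ j2, R2.p j2
            * (A1 j1 + A2 j2 + ∑ j3, p3 j1 j2 j3 * CW j1 j2 j3)
        ≤ ∑ j1, R1.p j1 * ∑ j2, R2.p j2 * (A1 j1 + A2 j2 + B) := by
          refine Finset.sum_le_sum fun j1 _ => ?_
          refine mul_le_mul_of_nonneg_left ?_ (R1.p_nonneg j1)
          refine Finset.sum_le_sum fun j2 _ => ?_
          refine mul_le_mul_of_nonneg_left ?_ (R2.p_nonneg j2)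
          exact add_le_add (le_refl _) (hTC j1 j2)
      _ = ∑ j1, R1.p j1 * (A1 j1 + (expCost μ R2 + B)) := by
          refine Finset.sum_congr rfl fun j1 _ => ?_
          congr 1
          calc ∑ j2, R2.p j2 * (A1 j1 + A2 j2 + B)
              = ∑ j2, R2.p j2 * (A2 j2 + (A1 j1 + B)) := by
                refine Finset.sum_congr rfl fun j2 _ => by ring
            _ = (∑ j2, R2.p j2 * A2 j2) + (A1 j1 + B) :=
                sum_weight_add R2.p R2.p_sum A2 (A1 j1 + B)
            _ = A1 j1 + (expCost μ R2 + B) := by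
                rw [show (∑ j2, R2.p j2 * A2 j2) = expCost μ R2 from rfl]
                ring
      _ = (∑ j1, R1.p j1 * A1 j1) + (expCost μ R2 + B) :=
          sum_weight_add R1.p R1.p_sum A1 (expCost μ R2 + B)
      _ = expCost μ R1 + expCost μ R2 + B := by
          rw [show (∑ j1, R1.p j1 * A1 j1) = expCost μ R1 from rfl]
          ring

end Composed

section KeyStep

set_option maxHeartbeats 1000000 in
lemma key_step (X : Set (ι → Bool)) (f : (ι → Bool) → Bool) (γ : ℝ)
    (h1 : 1 / 2 ≤ γ) (h2 : γ ≤ 1) (μ : InputDist ι X) {ε : ℝ} (hε : 0 < ε) :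
    succRdist f μ.μ (3 * γ ^ 2 - 2 * γ ^ 3) ≤ 4 * succRmax X f γ + 4 * ε := by
  classical
  set T := succRmax X f γ with hT
  have hT0 : 0 ≤ T := succRmax_nonneg f X γ
  have hγ'1 : 3 * γ ^ 2 - 2 * γ ^ 3 ≤ 1 := by nlinarith [sq_nonneg (1 - γ)]
  obtain ⟨R1, hR1s, hR1c⟩ := exists_alg f X h2 μ hε
  have hc1n := cAvg_nonneg f μ.μ R1
  have hc1u := cAvg_le_one f μ.μ R1
  have hs1 : γ ≤ ∑ x, μ.μ x * cAvg f μ.μ R1 x :=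
    le_trans hR1s (E1_agg f μ.μ μ.nonneg R1)
  have hsum_le1 : ∑ x, μ.μ x * cAvg f μ.μ R1 x ≤ 1 := by
    calc ∑ x, μ.μ x * cAvg f μ.μ R1 x ≤ ∑ x, μ.μ x * 1 :=
          Finset.sum_le_sum fun x _ =>
            mul_le_mul_of_nonneg_left (hc1u x) (μ.nonneg x)
      _ = 1 := by simpa using μ.sum_one
  set β := 1 - ∑ x, μ.μ x * cAvg f μ.μ R1 x with hβ
  have hβγ : β ≤ 1 - γ := by rw [hβ]; linarith
  have hβ0 : 0 ≤ β := by rw [hβ]; linarith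
  rcases eq_or_lt_of_le hβ0 with hβz | hβpos
  · -- the first stage is already (almost surely) correct
    have h11 : ∑ x, μ.μ x * cAvg f μ.μ R1 x = 1 := by
      rw [hβ] at hβz; linarith
    have hsc : 3 * γ ^ 2 - 2 * γ ^ 3 ≤ succAlgScore f μ.μ R1 := by
      have := E2_agg f μ.μ μ.nonneg R1
      linarith
    have := succRdist_le_of_alg f μ.μ μ.nonneg _ R1 hsc
    linarith
  · -- main case
    have hβ1 : β < 1 := by linarith
    set c1 := cAvg f μ.μ R1 with hc1
    set w : (ι → Bool) → ℝ := fun x => c1 x / (2 * (1 - β)) + (1 - c1 x) / (2 * β)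
      with hw
    have h2βpos : (0:ℝ) < 2 * β := by linarith
    have h2β'pos : (0:ℝ) < 2 * (1 - β) := by linarith
    have hw_half : ∀ x, 1 / 2 ≤ w x := by
      intro x
      have e1 : c1 x / 2 ≤ c1 x / (2 * (1 - β)) := by
        apply div_le_div_of_nonneg_left (hc1n x) h2β'pos
        linarith
      have e2 : (1 - c1 x) / 2 ≤ (1 - c1 x) / (2 * β) := by
        apply div_le_div_of_nonneg_left (by linarith [hc1u x]) h2βpos
        linarith
      have e3 : c1 x / 2 + (1 - c1 x) / 2 = 1 / 2 := by ring
      show (1:ℝ) / 2 ≤ c1 x / (2 * (1 - β)) + (1 - c1 x) / (2 * β)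
      linarith
    have hwnn : ∀ x, 0 ≤ w x := fun x => le_trans (by norm_num) (hw_half x)
    have hA : ∑ x, μ.μ x * c1 x = 1 - β := by rw [hβ]; ring
    have hB2 : ∑ x, μ.μ x * (1 - c1 x) = β := by
      have e : ∑ x, μ.μ x * (1 - c1 x) = (∑ x, μ.μ x) - ∑ x, μ.μ x * c1 x := by
        rw [← Finset.sum_sub_distrib]
        exact Finset.sum_congr rfl fun x _ => by ring
      rw [e, μ.sum_one, hβ]
    have hμ2sum : ∑ x, μ.μ x * w x = 1 := by
      calc ∑ x, μ.μ x * w x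
          = ∑ x, ((μ.μ x * c1 x) * (2 * (1 - β))⁻¹
              + (μ.μ x * (1 - c1 x)) * (2 * β)⁻¹) := by
            refine Finset.sum_congr rfl fun x _ => ?_
            show μ.μ x * (c1 x / (2 * (1 - β)) + (1 - c1 x) / (2 * β)) = _
            rw [div_eq_mul_inv, div_eq_mul_inv]; ring
        _ = (∑ x, μ.μ x * c1 x) * (2 * (1 - β))⁻¹
              + (∑ x, μ.μ x * (1 - c1 x)) * (2 * β)⁻¹ := by
            rw [Finset.sum_add_distrib, ← Finset.sum_mul, ← Finset.sum_mul]
        _ = 1 := by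
            rw [hA, hB2]
            have hne : (1:ℝ) - β ≠ 0 := by linarith
            field_simp
            ring
    set μ2 : InputDist ι X := ⟨fun x => μ.μ x * w x,
      fun x => mul_nonneg (μ.nonneg x) (hwnn x), hμ2sum,
      fun x hx => by show μ.μ x * w x = 0; rw [μ.supp x hx, zero_mul]⟩ with hμ2
    have hdens : ∀ x, μ.μ x ≤ 2 * μ2.μ x := by
      intro x
      show μ.μ x ≤ 2 * (μ.μ x * w x)
      have h5 := mul_le_mul_of_nonneg_left
        (mul_le_mul_of_nonneg_left (hw_half x) (μ.nonneg x))
        (by norm_num : (0:ℝ) ≤ 2)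
      calc μ.μ x = 2 * (μ.μ x * (1 / 2)) := by ring
        _ ≤ 2 * (μ.μ x * w x) := h5
    obtain ⟨R2, hR2s, hR2c⟩ := exists_alg f X h2 μ2 hε
    set c2 := cAvg f μ2.μ R2 with hc2
    have hc2n := cAvg_nonneg f μ2.μ R2
    have hc2u := cAvg_le_one f μ2.μ R2
    have hs2 : γ ≤ ∑ x, μ2.μ x * c2 x :=
      le_trans hR2s (E1_agg f μ2.μ μ2.nonneg R2)
    have hex : ∀ (j1 : Fin R1.k) (j2 : Fin R2.k), ∃ R3 : RandAlg ι Unit,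
        Zm f μ.μ μ2.μ (R1.T j1) (R2.T j2) ≠ 0 →
          (γ ≤ succAlgScore f (mu3 f μ.μ μ2.μ (R1.T j1) (R2.T j2)) R3 ∧
           expCost (mu3 f μ.μ μ2.μ (R1.T j1) (R2.T j2)) R3 ≤ T + ε) := by
      intro j1 j2
      by_cases hZ : Zm f μ.μ μ2.μ (R1.T j1) (R2.T j2) = 0
      · exact ⟨fullAlg, fun h => absurd hZ h⟩
      · set μ3 : InputDist ι X := ⟨mu3 f μ.μ μ2.μ (R1.T j1) (R2.T j2),
          mu3_nonneg f μ.μ μ2.μ μ.nonneg _ _,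
          mu3_sum f μ.μ μ2.μ _ _ hZ,
          fun x hx => by
            show μ.μ x * _ / _ = 0
            rw [μ.supp x hx, zero_mul, zero_div]⟩ with hμ3
        obtain ⟨R3, ha, hb⟩ := exists_alg f X h2 μ3 hε
        exact ⟨R3, fun _ => ⟨ha, hb⟩⟩
    obtain ⟨Rstar, hSs, hSc⟩ := composed_exists f μ.μ μ2.μ μ.nonneg μ.sum_one
      R1 R2 γ (T + ε) (by linarith) hex
    set U := ∑ x, μ.μ x * (c1 x * (1 - c2 x)) with hU
    set V := ∑ x, μ.μ x * ((1 - c1 x) * (1 - c2 x)) with hV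
    have hU0 : 0 ≤ U := Finset.sum_nonneg fun x _ =>
      mul_nonneg (μ.nonneg x) (mul_nonneg (hc1n x) (by linarith [hc2u x]))
    have hV0 : 0 ≤ V := Finset.sum_nonneg fun x _ =>
      mul_nonneg (μ.nonneg x)
        (mul_nonneg (by linarith [hc1u x]) (by linarith [hc2u x]))
    have hmid : ∑ x, μ.μ x * ((1 - c1 x) * c2 x) = β - V := by
      have e : ∑ x, μ.μ x * ((1 - c1 x) * c2 x)
          = (∑ x, μ.μ x * (1 - c1 x)) - V := by
        rw [hV, ← Finset.sum_sub_distrib]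
        exact Finset.sum_congr rfl fun x _ => by ring
      rw [e, hB2]
    have hcon : U * (2 * (1 - β))⁻¹ + V * (2 * β)⁻¹ ≤ 1 - γ := by
      have hexp : ∑ x, μ2.μ x * (1 - c2 x)
          = U * (2 * (1 - β))⁻¹ + V * (2 * β)⁻¹ := by
        calc ∑ x, μ2.μ x * (1 - c2 x)
            = ∑ x, ((μ.μ x * (c1 x * (1 - c2 x))) * (2 * (1 - β))⁻¹
                + (μ.μ x * ((1 - c1 x) * (1 - c2 x))) * (2 * β)⁻¹) := by
              refine Finset.sum_congr rfl fun x _ => ?_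
              show (μ.μ x * w x) * (1 - c2 x) = _
              rw [hw]
              show (μ.μ x * (c1 x / (2 * (1 - β)) + (1 - c1 x) / (2 * β)))
                * (1 - c2 x) = _
              rw [div_eq_mul_inv, div_eq_mul_inv]; ring
          _ = U * (2 * (1 - β))⁻¹ + V * (2 * β)⁻¹ := by
              rw [Finset.sum_add_distrib, ← Finset.sum_mul, ← Finset.sum_mul, hU, hV]
      have hq : ∑ x, μ2.μ x * (1 - c2 x) = 1 - ∑ x, μ2.μ x * c2 x := by
        have e : ∑ x, μ2.μ x * (1 - c2 x) = (∑ x, μ2.μ x) - ∑ x, μ2.μ x * c2 x := by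
          rw [← Finset.sum_sub_distrib]
          exact Finset.sum_congr rfl fun x _ => by ring
        rw [e, μ2.sum_one]
      linarith
    have hscore : 3 * γ ^ 2 - 2 * γ ^ 3 ≤ succAlgScore f μ.μ Rstar := by
      have hE : ∑ x, μ.μ x * (c1 x * c2 x) = (1 - β) - U := by
        have e : ∑ x, μ.μ x * (c1 x * c2 x) = (∑ x, μ.μ x * c1 x) - U := by
          rw [hU, ← Finset.sum_sub_distrib]
          exact Finset.sum_congr rfl fun x _ => by ring
        rw [e, hA]
      have hZZv : ∑ x, μ.μ x * (c1 x + c2 x - 2 * (c1 x * c2 x)) = U + (β - V) := by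
        have e : ∑ x, μ.μ x * (c1 x + c2 x - 2 * (c1 x * c2 x))
            = U + ∑ x, μ.μ x * ((1 - c1 x) * c2 x) := by
          rw [hU, ← Finset.sum_add_distrib]
          exact Finset.sum_congr rfl fun x _ => by ring
        rw [e, hmid]
      have hcon' : β * U + (1 - β) * V ≤ 2 * (1 - γ) * β * (1 - β) := by
        have hpos : (0:ℝ) < 2 * β * (1 - β) := by nlinarith
        have hkey : (2 * β * (1 - β)) * (U * (2 * (1 - β))⁻¹ + V * (2 * β)⁻¹)
            = β * U + (1 - β) * V := by
          have hne : (1:ℝ) - β ≠ 0 := by linarith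
          field_simp
        have hmul := mul_le_mul_of_nonneg_left hcon (le_of_lt hpos)
        rw [hkey] at hmul
        nlinarith
      have hquot : (1 - γ) * U + γ * V ≤ 2 * (1 - γ) ^ 2 * (1 - β) := by
        have step1 : β * ((1 - γ) * U + γ * V) ≤ (1 - γ) * (β * U + (1 - β) * V) := by
          nlinarith [hV0, hβγ]
        have step2 : (1 - γ) * (β * U + (1 - β) * V)
            ≤ (1 - γ) * (2 * (1 - γ) * β * (1 - β)) :=
          mul_le_mul_of_nonneg_left hcon' (by linarith)
        have step3 : β * ((1 - γ) * U + γ * V) ≤ β * (2 * (1 - γ) ^ 2 * (1 - β)) := by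
          nlinarith
        exact le_of_mul_le_mul_left (by linarith) hβpos
      have harith : 3 * γ ^ 2 - 2 * γ ^ 3 ≤ ((1 - β) - U) + γ * (U + (β - V)) := by
        nlinarith [mul_nonneg (mul_nonneg (by linarith : (0:ℝ) ≤ 1 - γ)
          (by linarith : (0:ℝ) ≤ (1 - γ) - β)) (by linarith : (0:ℝ) ≤ 1 - 2 * (1 - γ)),
          hquot, hU0, hV0]
      calc 3 * γ ^ 2 - 2 * γ ^ 3 ≤ ((1 - β) - U) + γ * (U + (β - V)) := harith
        _ = (∑ x, μ.μ x * (c1 x * c2 x))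
              + γ * ∑ x, μ.μ x * (c1 x + c2 x - 2 * (c1 x * c2 x)) := by
            rw [hE, hZZv]
        _ ≤ succAlgScore f μ.μ Rstar := hSs
    have hcost : expCost μ.μ Rstar ≤ 4 * T + 4 * ε := by
      have h2' : expCost μ.μ R2 ≤ 2 * (T + ε) :=
        le_trans (expCost_le_double μ.μ μ2.μ hdens R2) (by linarith)
      calc expCost μ.μ Rstar ≤ expCost μ.μ R1 + expCost μ.μ R2 + (T + ε) := hSc
        _ ≤ 4 * T + 4 * ε := by linarith
    have := succRdist_le_of_alg f μ.μ μ.nonneg (3 * γ ^ 2 - 2 * γ ^ 3) Rstar hscore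
    linarith

end KeyStep

end Boost

end Boosting
/-- **Boosting for maximum distributional complexity**:
`R̄̄_{3γ²−2γ³}(f) ≤ 4·R̄̄_γ(f)` for every `γ ∈ [1/2,1]` (success-probability score). -/
theorem boosting_maximum_distributional
    (m : ℕ) (X : Set (Fin m → Bool)) (f : (Fin m → Bool) → Bool)
    (γ : ℝ) (h1 : 1 / 2 ≤ γ) (h2 : γ ≤ 1) :
    succRmax X f (3 * γ ^ 2 - 2 * γ ^ 3) ≤ 4 * succRmax X f γ := by
  have h4T : 0 ≤ 4 * succRmax X f γ := by
    linarith [Boost.succRmax_nonneg f X γ]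
  refine Real.iSup_le (fun μ => ?_) h4T
  refine le_of_forall_pos_le_add fun ε hε => ?_
  have := Boost.key_step X f γ h1 h2 μ (show 0 < ε / 4 by linarith)
  linarith
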